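/- arXiv:2410.20460 — 3 statements merged into one kernel-verified Lean document; each statement's English description precedes it below -/
import Mathlib

section
/- For all n ≥ 0, the number of words w of length n over {1,2} such that 1w is Knuth-equivalent to w1 equals the central binomial coefficient C(n, ⌊n/2⌋). -/
namespace Plactic

/-- Insert `x` into a weakly increasing row, returning the new row and the bumped entry. -/
def rowInsert (x : ℕ) : List ℕ → List ℕ × Option ℕ
  | [] => ([x], none)
  | y :: ys =>
    if x < y then (x :: ys, some y)
    else
      let p := rowInsert x ys
      (y :: p.1, p.2)

/-- RSK insertion of `x` into a tableau given as a list of rows. -/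
def tInsert (x : ℕ) : List (List ℕ) → List (List ℕ)
  | [] => [[x]]
  | r :: rs =>
    match rowInsert x r with
    | (r', none) => r' :: rs
    | (r', some y) => r' :: tInsert y rs

/-- The RSK insertion tableau of a word. -/
def P (w : List ℕ) : List (List ℕ) := w.foldl (fun t x => tInsert x t) []

/-- The `i`-th row (0-indexed) of the insertion tableau of `w`. -/
def row (w : List ℕ) (i : ℕ) : List ℕ := (P w).getD i []

/-- The `j`-th column (0-indexed) of a tableau, read top to bottom. -/
def col (T : List (List ℕ)) (j : ℕ) : List ℕ := T.filterMap (fun r => r[j]?)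

/-- An elementary Knuth transposition. -/
inductive KStep : List ℕ → List ℕ → Prop
  | k1 (x y : List ℕ) (a b c : ℕ) : a ≤ b → b < c →
      KStep (x ++ [a, c, b] ++ y) (x ++ [c, a, b] ++ y)
  | k2 (x y : List ℕ) (a b c : ℕ) : a < b → b ≤ c →
      KStep (x ++ [b, a, c] ++ y) (x ++ [b, c, a] ++ y)

/-- Knuth equivalence: the equivalence relation generated by Knuth transpositions. -/
def KEquiv : List ℕ → List ℕ → Prop := Relation.EqvGen KStep

/-- The centralizer of `u` in the plactic monoid. -/
def Cent (u : List ℕ) : Set (List ℕ) := {w | KEquiv (u ++ w) (w ++ u)}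

end Plactic

namespace Aux16
open Plactic


/-- truncated max-prefix statistic: `dstat r` = max over prefixes p of r of (count 2 p - count (non-2) p)⁺ -/
def dstat : List ℕ → ℕ
  | [] => 0
  | x :: r => if x = 2 then dstat r + 1 else dstat r - 1

def D (w : List ℕ) : ℕ := dstat w.reverse

def run : List ℕ → ℕ → ℕ
  | [], k => k
  | x :: s, k => if x = 2 then run s k + 1 else run s k - 1

lemma dstat_append (s t : List ℕ) : dstat (s ++ t) = run s (dstat t) := by
  induction s with
  | nil => simp [run]
  | cons x s ih => simp [dstat, run, ih]

lemma dstat_le_iff (r : List ℕ) : ∀ k, dstat r ≤ k ↔ ∀ p, p <+: r → 2 * p.count 2 ≤ p.length + k := by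
  induction r with
  | nil =>
    intro k
    constructor
    · intro _ p hp
      simp [List.prefix_nil.mp hp]
    · intro _; simp [dstat]
  | cons x r ih =>
    intro k
    constructor
    · intro h p hp
      rcases List.prefix_cons_iff.mp hp with h0 | ⟨t, rfl, ht⟩
      · simp [h0]
      · simp only [dstat] at h
        by_cases hx : x = 2
        · subst hx
          simp only [reduceIte] at h
          have hk : 1 ≤ k := by omega
          have := (ih (k-1)).mp (by omega) t ht
          simp [List.count_cons]
          omega
        · rw [if_neg hx] at h
          have := (ih (k+1)).mp (by omega) t ht
          have hx2 : (if x = 2 then 1 else 0) = 0 := by simp [hx]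
          simp [List.count_cons, hx2]
          omega
    · intro h
      simp only [dstat]
      by_cases hx : x = 2
      · subst hx
        simp only [reduceIte]
        have hk : 1 ≤ k := by
          have := h [2] (by simp [List.prefix_cons_iff])
          simp at this
          omega
        have : dstat r ≤ k - 1 := by
          apply (ih (k-1)).mpr
          intro p hp
          have := h (2 :: p) (List.cons_prefix_cons.mpr ⟨rfl, hp⟩)
          simp [List.count_cons] at this
          omega
        omega
      · rw [if_neg hx]
        have : dstat r ≤ k + 1 := by
          apply (ih (k+1)).mpr
          intro p hp
          have := h (x :: p) (List.cons_prefix_cons.mpr ⟨rfl, hp⟩)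
          have hx2 : (if x = 2 then (1:ℕ) else 0) = 0 := by simp [hx]
          simp [List.count_cons, hx2] at this
          omega
        omega

def okb : ℕ → List ℕ → Bool
  | _, [] => true
  | k, x :: r => if x = 2 then (decide (1 ≤ k)) && okb (k-1) r else okb (k+1) r

lemma okb_iff (r : List ℕ) : ∀ k, okb k r = true ↔ dstat r ≤ k := by
  induction r with
  | nil => intro k; simp [okb, dstat]
  | cons x r ih =>
    intro k
    by_cases hx : x = 2
    · subst hx
      simp only [okb, reduceIte, Bool.and_eq_true, decide_eq_true_eq, dstat, ih]
      omega
    · simp only [okb, if_neg hx, dstat, if_neg hx, ih]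
      omega



open Plactic

def L (w : List ℕ) : Prop := ∀ x ∈ w, x = 1 ∨ x = 2

lemma D_middle {m1 m2 : List ℕ} (x y : List ℕ)
    (h : ∀ k, run m1.reverse k = run m2.reverse k) :
    D (x ++ m1 ++ y) = D (x ++ m2 ++ y) := by
  have key : ∀ m : List ℕ, dstat ((x ++ m ++ y).reverse)
      = run y.reverse (run m.reverse (dstat x.reverse)) := by
    intro m
    rw [List.reverse_append, List.reverse_append, dstat_append, dstat_append]
  show dstat _ = dstat _
  rw [key, key, h]

lemma kstep_letters {u v : List ℕ} (h : KStep u v) : L u ↔ L v := by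
  cases h with
  | k1 x y a b c h1 h2 =>
    constructor <;> (intro h z hz; apply h z; simp at hz ⊢; tauto)
  | k2 x y a b c h1 h2 =>
    constructor <;> (intro h z hz; apply h z; simp at hz ⊢; tauto)

lemma kstep_D_eq {u v : List ℕ} (h : KStep u v) (hu : L u) : D u = D v := by
  cases h with
  | k1 x y a b c h1 h2 =>
    have ha : a = 1 ∨ a = 2 := hu a (by simp)
    have hb : b = 1 ∨ b = 2 := hu b (by simp)
    have hc : c = 1 ∨ c = 2 := hu c (by simp)
    have ha1 : a = 1 := by omega
    have hb1 : b = 1 := by omega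
    have hc2 : c = 2 := by omega
    subst ha1; subst hb1; subst hc2
    apply D_middle
    intro k
    simp [run]
  | k2 x y a b c h1 h2 =>
    have ha : a = 1 ∨ a = 2 := hu a (by simp)
    have hb : b = 1 ∨ b = 2 := hu b (by simp)
    have hc : c = 1 ∨ c = 2 := hu c (by simp)
    have ha1 : a = 1 := by omega
    have hb1 : b = 2 := by omega
    have hc2 : c = 2 := by omega
    subst ha1; subst hb1; subst hc2
    apply D_middle
    intro k
    simp [run]

lemma KEquiv.inv {u v : List ℕ} (h : KEquiv u v) : (L u ↔ L v) ∧ (L u → D u = D v) := by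
  induction h with
  | rel u v h => exact ⟨kstep_letters h, kstep_D_eq h⟩
  | refl u => exact ⟨Iff.rfl, fun _ => rfl⟩
  | symm u v h ih => exact ⟨ih.1.symm, fun hv => (ih.2 (ih.1.mpr hv)).symm⟩
  | trans u v w h1 h2 ih1 ih2 =>
    exact ⟨ih1.1.trans ih2.1, fun hu => (ih1.2 hu).trans (ih2.2 (ih1.1.mp hu))⟩



open Plactic

lemma kstep_context {u v : List ℕ} (p q : List ℕ) (h : KStep u v) :
    KStep (p ++ u ++ q) (p ++ v ++ q) := by
  cases h with
  | k1 x y a b c h1 h2 =>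
    have := KStep.k1 (p ++ x) (y ++ q) a b c h1 h2
    simpa [List.append_assoc] using this
  | k2 x y a b c h1 h2 =>
    have := KStep.k2 (p ++ x) (y ++ q) a b c h1 h2
    simpa [List.append_assoc] using this

lemma kequiv_context {u v : List ℕ} (p q : List ℕ) (h : KEquiv u v) :
    KEquiv (p ++ u ++ q) (p ++ v ++ q) := by
  induction h with
  | rel u v h => exact Relation.EqvGen.rel _ _ (kstep_context p q h)
  | refl u => exact Relation.EqvGen.refl _
  | symm u v h ih => exact Relation.EqvGen.symm _ _ ih
  | trans u v w h1 h2 ih1 ih2 => exact Relation.EqvGen.trans _ _ _ ih1 ih2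

lemma kequiv_trans {u v w : List ℕ} (h1 : KEquiv u v) (h2 : KEquiv v w) : KEquiv u w :=
  Relation.EqvGen.trans _ _ _ h1 h2

lemma kequiv_symm {u v : List ℕ} (h : KEquiv u v) : KEquiv v u :=
  Relation.EqvGen.symm _ _ h

lemma kequiv_refl (u : List ℕ) : KEquiv u u := Relation.EqvGen.refl _

lemma kequiv_of_eq {u v : List ℕ} (h : u = v) : KEquiv u v := h ▸ kequiv_refl u

/-- `2^(b+1) 1 ~ 2 1 2^b` -/
lemma lemA (b : ℕ) :
    KEquiv (List.replicate (b+1) 2 ++ [1]) ([2,1] ++ List.replicate b 2) := by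
  induction b with
  | zero => exact kequiv_of_eq (by simp)
  | succ b ih =>
    have step1 : KEquiv (List.replicate (b+2) 2 ++ [1]) (List.replicate b 2 ++ [2,1,2]) := by
      have h := Relation.EqvGen.rel _ _
        (KStep.k2 (List.replicate b 2) ([] : List ℕ) 1 2 2 (by omega) (by omega))
      have h' : KEquiv (List.replicate b 2 ++ [2,2,1] ++ []) (List.replicate b 2 ++ [2,1,2] ++ []) :=
        kequiv_symm h
      have e : List.replicate (b+2) 2 ++ [1] = List.replicate b 2 ++ [2,2,1] ++ [] := by
        simp [List.replicate_add (b) 2 2, List.append_assoc]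
      rw [e]
      simpa using h'
    have step2 : KEquiv (List.replicate b 2 ++ [2,1,2]) (([2,1] ++ List.replicate b 2) ++ [2]) := by
      have e : List.replicate b 2 ++ [2,1,2] = (List.replicate (b+1) 2 ++ [1]) ++ [2] := by
        simp [List.replicate_succ' , List.append_assoc]
      rw [e]
      have := kequiv_context ([] : List ℕ) [2] ih
      simpa using this
    have e2 : ([2,1] ++ List.replicate b 2) ++ [2] = [2,1] ++ List.replicate (b+1) 2 := by
      simp [List.replicate_succ', List.append_assoc]
    exact kequiv_trans step1 (kequiv_trans step2 (kequiv_of_eq e2))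

/-- `1^a 2 1 ~ 2 1^(a+1)` -/
lemma lemB (a : ℕ) :
    KEquiv (List.replicate a 1 ++ [2,1]) ([2] ++ List.replicate (a+1) 1) := by
  induction a with
  | zero => exact kequiv_of_eq (by simp)
  | succ a ih =>
    have step1 : KEquiv (List.replicate (a+1) 1 ++ [2,1]) (List.replicate a 1 ++ [2,1,1]) := by
      have h := Relation.EqvGen.rel _ _
        (KStep.k1 (List.replicate a 1) ([] : List ℕ) 1 1 2 (by omega) (by omega))
      have e : List.replicate (a+1) 1 ++ [2,1] = List.replicate a 1 ++ [1,2,1] ++ [] := by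
        simp [List.replicate_succ', List.append_assoc]
      rw [e]
      simpa [KEquiv] using h
    have step2 : KEquiv (List.replicate a 1 ++ [2,1,1]) (([2] ++ List.replicate (a+1) 1) ++ [1]) := by
      have e : List.replicate a 1 ++ [2,1,1] = (List.replicate a 1 ++ [2,1]) ++ [1] := by
        simp [List.append_assoc]
      rw [e]
      have := kequiv_context ([] : List ℕ) [1] ih
      simpa using this
    have e2 : ([2] ++ List.replicate (a+1) 1) ++ [1] = [2] ++ List.replicate (a+2) 1 := by
      simp [List.replicate_succ', List.append_assoc]
    exact kequiv_trans step1 (e2 ▸ step2)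

/-- `1 2^c 1^a ~ 2^c 1^(a+1)` for `c ≤ a` -/
lemma lemL2 : ∀ c a : ℕ, c ≤ a →
    KEquiv ([1] ++ List.replicate c 2 ++ List.replicate a 1)
      (List.replicate c 2 ++ List.replicate (a+1) 1) := by
  intro c
  induction c with
  | zero => intro a _; exact kequiv_of_eq (by simp [List.replicate_succ])
  | succ c ih =>
    intro a ha
    obtain ⟨a', rfl⟩ : ∃ a', a = a' + 1 := ⟨a - 1, by omega⟩
    have step1 : KEquiv ([1] ++ List.replicate (c+1) 2 ++ List.replicate (a'+1) 1)
        (([1] ++ List.replicate c 2 ++ List.replicate a' 1) ++ [2,1]) := by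
      have h := kequiv_context ([1] ++ List.replicate c 2) ([] : List ℕ) (kequiv_symm (lemB a'))
      have e1 : [1] ++ List.replicate c 2 ++ ([2] ++ List.replicate (a'+1) 1) ++ []
          = [1] ++ List.replicate (c+1) 2 ++ List.replicate (a'+1) 1 := by
        simp [List.replicate_succ', List.append_assoc]
      have e2 : [1] ++ List.replicate c 2 ++ (List.replicate a' 1 ++ [2,1]) ++ []
          = ([1] ++ List.replicate c 2 ++ List.replicate a' 1) ++ [2,1] := by
        simp [List.append_assoc]
      rw [e1, e2] at h
      exact h
    have step2 : KEquiv (([1] ++ List.replicate c 2 ++ List.replicate a' 1) ++ [2,1])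
        ((List.replicate c 2 ++ List.replicate (a'+1) 1) ++ [2,1]) := by
      have := kequiv_context ([] : List ℕ) [2,1] (ih a' (by omega))
      simpa using this
    have step3 : KEquiv ((List.replicate c 2 ++ List.replicate (a'+1) 1) ++ [2,1])
        (List.replicate (c+1) 2 ++ List.replicate (a'+2) 1) := by
      have h := kequiv_context (List.replicate c 2) ([] : List ℕ) (lemB (a'+1))
      have e1 : List.replicate c 2 ++ (List.replicate (a'+1) 1 ++ [2,1]) ++ []
          = (List.replicate c 2 ++ List.replicate (a'+1) 1) ++ [2,1] := by
        simp [List.append_assoc]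
      have e2 : List.replicate c 2 ++ ([2] ++ List.replicate (a'+2) 1) ++ []
          = List.replicate (c+1) 2 ++ List.replicate (a'+2) 1 := by
        simp [List.replicate_succ', List.append_assoc]
      rw [e1, e2] at h
      exact h
    exact kequiv_trans step1 (kequiv_trans step2 step3)


lemma D_append_two (v : List ℕ) : D (v ++ [2]) = D v + 1 := by
  simp [D, dstat]

lemma D_append_one (v : List ℕ) : D (v ++ [1]) = D v - 1 := by
  simp [D, dstat]

lemma dstat_concat_one (r : List ℕ) : dstat (r ++ [1]) = dstat r := by
  induction r with
  | nil => simp [dstat]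
  | cons x r ih => simp [dstat, ih]

lemma D_cons_one (w : List ℕ) : D (1 :: w) = D w := by
  simp [D, dstat_concat_one]

lemma dstat_le_count (r : List ℕ) : dstat r ≤ r.count 2 := by
  induction r with
  | nil => simp [dstat]
  | cons x r ih =>
    by_cases hx : x = 2
    · subst hx; simp [dstat, List.count_cons]; omega
    · simp [dstat, hx, List.count_cons]
      omega

lemma D_le_count (w : List ℕ) : D w ≤ w.count 2 := by
  have := dstat_le_count w.reverse
  simpa [D, List.count_reverse] using this

lemma count_sum (w : List ℕ) (hw : L w) : w.count 1 + w.count 2 = w.length := by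
  induction w with
  | nil => simp
  | cons x w ih =>
    have hx : x = 1 ∨ x = 2 := hw x (by simp)
    have hw' : L w := fun z hz => hw z (by simp [hz])
    have := ih hw'
    rcases hx with rfl | rfl <;> simp [List.count_cons] <;> omega

lemma NF : ∀ w : List ℕ, L w → KEquiv w
    (List.replicate (w.count 2 - D w) 2 ++ List.replicate (w.count 1) 1
      ++ List.replicate (D w) 2) := by
  intro w
  induction w using List.reverseRecOn with
  | nil => intro _; exact kequiv_of_eq (by simp [D, dstat])
  | append_singleton v x ih =>
    intro hw
    have hv : L v := fun z hz => hw z (by simp [hz])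
    have hx : x = 1 ∨ x = 2 := hw x (by simp)
    have hDle : D v ≤ v.count 2 := D_le_count v
    have hbase := kequiv_context ([] : List ℕ) [x] (ih hv)
    simp only [List.nil_append] at hbase
    rcases hx with rfl | rfl
    · -- x = 1
      have hc2 : (v ++ [1]).count 2 = v.count 2 := by simp [List.count_append]
      have hc1 : (v ++ [1]).count 1 = v.count 1 + 1 := by simp [List.count_append]
      have hD : D (v ++ [1]) = D v - 1 := D_append_one v
      rcases Nat.eq_zero_or_pos (D v) with h0 | hpos
      · rw [hc2, hc1, hD, h0]
        have e : (List.replicate (v.count 2 - D v) 2 ++ List.replicate (v.count 1) 1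
            ++ List.replicate (D v) 2) ++ [1]
            = List.replicate (v.count 2 - (0 - 1)) 2 ++ List.replicate (v.count 1 + 1) 1
              ++ List.replicate (0 - 1) 2 := by
          rw [h0]
          simp [List.replicate_succ', List.append_assoc]
        exact kequiv_trans hbase (kequiv_of_eq e)
      · obtain ⟨b, hb⟩ : ∃ b, D v = b + 1 := ⟨D v - 1, by omega⟩
        set c := v.count 2 - (b + 1) with hc
        have e1 : (List.replicate (v.count 2 - D v) 2 ++ List.replicate (v.count 1) 1
            ++ List.replicate (D v) 2) ++ [1]
            = (List.replicate c 2 ++ List.replicate (v.count 1) 1)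
              ++ (List.replicate (b+1) 2 ++ [1]) ++ [] := by
          rw [hb]
          simp [List.append_assoc]
          omega
        have h2 := kequiv_context (List.replicate c 2 ++ List.replicate (v.count 1) 1)
          ([] : List ℕ) (lemA b)
        have h3 := kequiv_context (List.replicate c 2) (List.replicate b 2) (lemB (v.count 1))
        have e2 : (List.replicate c 2 ++ List.replicate (v.count 1) 1) ++ ([2,1]
            ++ List.replicate b 2) ++ []
            = List.replicate c 2 ++ (List.replicate (v.count 1) 1 ++ [2,1])
              ++ List.replicate b 2 := by
          simp [List.append_assoc]
        have e3 : List.replicate c 2 ++ ([2] ++ List.replicate (v.count 1 + 1) 1)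
              ++ List.replicate b 2
            = List.replicate ((v ++ [1]).count 2 - D (v ++ [1])) 2
              ++ List.replicate ((v ++ [1]).count 1) 1 ++ List.replicate (D (v ++ [1])) 2 := by
          rw [hc2, hc1, hD, hb]
          have : v.count 2 - (b + 1 - 1) = c + 1 := by omega
          rw [this]
          simp [List.replicate_succ', List.append_assoc]
        exact kequiv_trans hbase (kequiv_trans (kequiv_of_eq e1) (kequiv_trans h2
          (kequiv_trans (kequiv_of_eq e2) (kequiv_trans h3 (kequiv_of_eq e3)))))
    · -- x = 2
      have hc2 : (v ++ [2]).count 2 = v.count 2 + 1 := by simp [List.count_append]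
      have hc1 : (v ++ [2]).count 1 = v.count 1 := by simp [List.count_append]
      have hD : D (v ++ [2]) = D v + 1 := D_append_two v
      rw [hc2, hc1, hD]
      have e : (List.replicate (v.count 2 - D v) 2 ++ List.replicate (v.count 1) 1
          ++ List.replicate (D v) 2) ++ [2]
          = List.replicate (v.count 2 + 1 - (D v + 1)) 2 ++ List.replicate (v.count 1) 1
            ++ List.replicate (D v + 1) 2 := by
        have : v.count 2 + 1 - (D v + 1) = v.count 2 - D v := by omega
        rw [this]
        simp [List.replicate_succ', List.append_assoc]
      exact kequiv_trans hbase (kequiv_of_eq e)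

lemma char (w : List ℕ) (hw : L w) :
    KEquiv ([1] ++ w) (w ++ [1]) ↔ D w = 0 := by
  constructor
  · intro h
    have h1 : L ([1] ++ w) := by
      intro z hz
      simp at hz
      rcases hz with rfl | hz
      · left; rfl
      · exact hw z hz
    have hDeq := (KEquiv.inv h).2 h1
    have e1 : D ([1] ++ w) = D w := by
      have : ([1] : List ℕ) ++ w = 1 :: w := rfl
      rw [this, D_cons_one]
    have e2 : D (w ++ [1]) = D w - 1 := D_append_one w
    omega
  · intro h0
    have hc : w.count 2 ≤ w.count 1 := by
      have h2 := (dstat_le_iff w.reverse 0).mp (le_of_eq h0) w.reverse (List.prefix_refl _)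
      have h3 := count_sum w hw
      simp [List.count_reverse] at h2
      omega
    have hnf := NF w hw
    rw [h0] at hnf
    have hnf' : KEquiv w (List.replicate (w.count 2) 2 ++ List.replicate (w.count 1) 1) := by
      have e : List.replicate (w.count 2 - 0) 2 ++ List.replicate (w.count 1) 1
          ++ List.replicate 0 2 = List.replicate (w.count 2) 2 ++ List.replicate (w.count 1) 1 := by
        simp
      exact kequiv_trans hnf (kequiv_of_eq e)
    have left : KEquiv ([1] ++ w)
        (List.replicate (w.count 2) 2 ++ List.replicate (w.count 1 + 1) 1) := by
      have hctx := kequiv_context [1] ([] : List ℕ) hnf'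
      simp only [List.append_nil] at hctx
      exact kequiv_trans hctx (lemL2 (w.count 2) (w.count 1) hc)
    have right : KEquiv (w ++ [1])
        (List.replicate (w.count 2) 2 ++ List.replicate (w.count 1 + 1) 1) := by
      have hctx := kequiv_context ([] : List ℕ) [1] hnf'
      simp only [List.nil_append] at hctx
      have e : (List.replicate (w.count 2) 2 ++ List.replicate (w.count 1) 1) ++ [1]
          = List.replicate (w.count 2) 2 ++ List.replicate (w.count 1 + 1) 1 := by
        simp [List.replicate_succ', List.append_assoc]
      exact kequiv_trans hctx (kequiv_of_eq e)
    exact kequiv_trans left (kequiv_symm right)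

def WS : ℕ → Finset (List ℕ)
  | 0 => {[]}
  | n+1 => (WS n).biUnion fun r => {1 :: r, 2 :: r}

lemma mem_WS : ∀ n (r : List ℕ), r ∈ WS n ↔ r.length = n ∧ L r := by
  intro n
  induction n with
  | zero =>
    intro r
    simp only [WS, Finset.mem_singleton]
    constructor
    · rintro rfl; exact ⟨rfl, by intro z hz; simp at hz⟩
    · rintro ⟨hl, _⟩; exact List.length_eq_zero_iff.mp hl
  | succ n ih =>
    intro r
    simp only [WS, Finset.mem_biUnion, Finset.mem_insert, Finset.mem_singleton]
    constructor
    · rintro ⟨t, ht, rfl | rfl⟩ <;> obtain ⟨hl, hL⟩ := (ih t).mp ht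
      · refine ⟨by simp [hl], ?_⟩
        intro z hz
        rcases List.mem_cons.mp hz with rfl | hz
        · exact Or.inl rfl
        · exact hL z hz
      · refine ⟨by simp [hl], ?_⟩
        intro z hz
        rcases List.mem_cons.mp hz with rfl | hz
        · exact Or.inr rfl
        · exact hL z hz
    · rintro ⟨hl, hL⟩
      cases r with
      | nil => simp at hl
      | cons x t =>
        refine ⟨t, (ih t).mpr ⟨by simpa using hl, fun z hz => hL z (by simp [hz])⟩, ?_⟩
        rcases hL x (by simp) with rfl | rfl
        · exact Or.inl rfl
        · exact Or.inr rfl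

def F (n k : ℕ) : Finset (List ℕ) := (WS n).filter (fun r => okb k r = true)

def G (n k : ℕ) : ℕ :=
  ∑ m ∈ Finset.range (n+1), if n ≤ 2*m + k + 1 ∧ 2*m ≤ n + k then n.choose m else 0

lemma WS_succ (n : ℕ) :
    WS (n+1) = ((WS n).image (fun r => 1 :: r)) ∪ ((WS n).image (fun r => 2 :: r)) := by
  ext r
  simp only [WS, Finset.mem_biUnion, Finset.mem_insert, Finset.mem_singleton,
    Finset.mem_union, Finset.mem_image]
  constructor
  · rintro ⟨t, ht, rfl | rfl⟩
    · exact Or.inl ⟨t, ht, rfl⟩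
    · exact Or.inr ⟨t, ht, rfl⟩
  · rintro (⟨t, ht, rfl⟩ | ⟨t, ht, rfl⟩)
    · exact ⟨t, ht, Or.inl rfl⟩
    · exact ⟨t, ht, Or.inr rfl⟩

lemma cons_inj (a : ℕ) : Function.Injective (fun r : List ℕ => a :: r) := by
  intro x y h
  simpa using h

lemma F_card_succ (n k : ℕ) :
    (F (n+1) k).card = (F n (k+1)).card + (if 1 ≤ k then (F n (k-1)).card else 0) := by
  classical
  rw [F, WS_succ, Finset.filter_union]
  have hdisj : Disjoint
      ((((WS n).image (fun r => 1 :: r))).filter (fun r => okb k r = true))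
      ((((WS n).image (fun r => 2 :: r))).filter (fun r => okb k r = true)) := by
    apply Finset.disjoint_filter_filter
    rw [Finset.disjoint_left]
    rintro a ha hb
    obtain ⟨t, _, rfl⟩ := Finset.mem_image.mp ha
    obtain ⟨t', _, h⟩ := Finset.mem_image.mp hb
    exact absurd (List.head_eq_of_cons_eq h.symm) (by norm_num)
  rw [Finset.card_union_of_disjoint hdisj]
  congr 1
  · rw [Finset.filter_image]
    rw [Finset.card_image_of_injective _ (cons_inj 1)]
    congr 1
  · rcases Nat.eq_zero_or_pos k with rfl | hk
    · rw [if_neg (by omega)]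
      rw [Finset.card_eq_zero, Finset.filter_eq_empty_iff]
      intro r hr
      obtain ⟨t, _, rfl⟩ := Finset.mem_image.mp hr
      simp [okb]
    · have hk' : 1 ≤ k := hk
      rw [if_pos hk', Finset.filter_image,
        Finset.card_image_of_injective _ (cons_inj 2), F]
      congr 1
      apply Finset.filter_congr
      intro r _
      simp [okb, hk']

lemma G_succ_succ (n k : ℕ) : G (n+1) (k+1) = G n (k+2) + G n k := by
  classical
  have peel : G (n+1) (k+1)
      = (∑ m ∈ Finset.range (n+1),
          (if n+1 ≤ 2*(m+1)+(k+1)+1 ∧ 2*(m+1) ≤ (n+1)+(k+1) then (n+1).choose (m+1) else 0))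
        + (if n+1 ≤ 2*0+(k+1)+1 ∧ 2*0 ≤ (n+1)+(k+1) then (n+1).choose 0 else 0) := by
    rw [G]
    exact Finset.sum_range_succ' _ (n+1)
  set S1 := ∑ m ∈ Finset.range (n+1),
      (if n ≤ 2*m+k+3 ∧ 2*m ≤ n+k then n.choose m else 0) with hS1
  set S2 := ∑ m ∈ Finset.range (n+1),
      (if n ≤ 2*m+k+3 ∧ 2*m ≤ n+k then n.choose (m+1) else 0) with hS2
  set E := ∑ m ∈ Finset.range (n+1),
      (if n+k+1 ≤ 2*m ∧ 2*m ≤ n+k+2 then n.choose m else 0) with hE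
  have hsummand : ∀ m,
      (if n+1 ≤ 2*(m+1)+(k+1)+1 ∧ 2*(m+1) ≤ (n+1)+(k+1) then (n+1).choose (m+1) else 0)
      = (if n ≤ 2*m+k+3 ∧ 2*m ≤ n+k then n.choose m else 0)
        + (if n ≤ 2*m+k+3 ∧ 2*m ≤ n+k then n.choose (m+1) else 0) := by
    intro m
    have hcond : (n+1 ≤ 2*(m+1)+(k+1)+1 ∧ 2*(m+1) ≤ (n+1)+(k+1))
        ↔ (n ≤ 2*m+k+3 ∧ 2*m ≤ n+k) := by omega
    by_cases h : n ≤ 2*m+k+3 ∧ 2*m ≤ n+k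
    · rw [if_pos (hcond.mpr h), if_pos h, if_pos h, Nat.choose_succ_succ]
    · rw [if_neg (fun hh => h (hcond.mp hh)), if_neg h, if_neg h]
  have peel2 : G (n+1) (k+1) = S1 + S2 + (if n ≤ k+1 then 1 else 0) := by
    rw [peel]
    congr 1
    · rw [hS1, hS2, ← Finset.sum_add_distrib]
      exact Finset.sum_congr rfl (fun m _ => hsummand m)
    · rw [Nat.choose_zero_right]
      split_ifs <;> omega
  have claim1 : S1 + E = G n (k+2) := by
    rw [hS1, hE, G, ← Finset.sum_add_distrib]
    apply Finset.sum_congr rfl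
    intro m _
    split_ifs <;> omega
  have claim2 : S2 + (if n ≤ k+1 then 1 else 0) = G n k + E := by
    have e1 : (∑ m ∈ Finset.range (n+2),
        (if 1 ≤ m ∧ n ≤ 2*m+k+1 ∧ 2*m ≤ n+k+2 then n.choose m else 0)) = S2 := by
      rw [Finset.sum_range_succ' _ (n+1)]
      have last0 : (if 1 ≤ (0:ℕ) ∧ n ≤ 2*0+k+1 ∧ 2*0 ≤ n+k+2 then n.choose 0 else 0) = 0 := by
        rw [if_neg (by omega)]
      rw [last0, add_zero, hS2]
      apply Finset.sum_congr rfl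
      intro m _
      have hcond : (1 ≤ m+1 ∧ n ≤ 2*(m+1)+k+1 ∧ 2*(m+1) ≤ n+k+2)
          ↔ (n ≤ 2*m+k+3 ∧ 2*m ≤ n+k) := by omega
      by_cases h : n ≤ 2*m+k+3 ∧ 2*m ≤ n+k
      · rw [if_pos (hcond.mpr h), if_pos h]
      · rw [if_neg (fun hh => h (hcond.mp hh)), if_neg h]
    have e2 : (∑ m ∈ Finset.range (n+2),
        (if 1 ≤ m ∧ n ≤ 2*m+k+1 ∧ 2*m ≤ n+k+2 then n.choose m else 0))
        = ∑ m ∈ Finset.range (n+1),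
          (if 1 ≤ m ∧ n ≤ 2*m+k+1 ∧ 2*m ≤ n+k+2 then n.choose m else 0) := by
      rw [Finset.sum_range_succ]
      simp [Nat.choose_succ_self]
    have e3 : (∑ m ∈ Finset.range (n+1),
          (if 1 ≤ m ∧ n ≤ 2*m+k+1 ∧ 2*m ≤ n+k+2 then n.choose m else 0))
        + (∑ m ∈ Finset.range (n+1), (if m = 0 ∧ n ≤ k+1 then n.choose m else 0))
        = G n k + E := by
      rw [G, hE, ← Finset.sum_add_distrib, ← Finset.sum_add_distrib]
      apply Finset.sum_congr rfl
      intro m _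
      split_ifs <;> omega
    have e4 : (∑ m ∈ Finset.range (n+1), (if m = 0 ∧ n ≤ k+1 then n.choose m else 0))
        = (if n ≤ k+1 then 1 else 0) := by
      rw [Finset.sum_eq_single_of_mem 0 (by simp)]
      · simp
      · intro m _ hm
        rw [if_neg (by tauto)]
    omega
  omega

lemma G_succ_zero (n : ℕ) : G (n+1) 0 = G n 1 := by
  classical
  have peel : G (n+1) 0
      = (∑ m ∈ Finset.range (n+1),
          (if n+1 ≤ 2*(m+1)+0+1 ∧ 2*(m+1) ≤ (n+1)+0 then (n+1).choose (m+1) else 0))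
        + (if n+1 ≤ 2*0+0+1 ∧ 2*0 ≤ (n+1)+0 then (n+1).choose 0 else 0) := by
    rw [G]
    exact Finset.sum_range_succ' _ (n+1)
  set S1 := ∑ m ∈ Finset.range (n+1),
      (if n ≤ 2*m+2 ∧ 2*m+1 ≤ n then n.choose m else 0) with hS1
  set S2 := ∑ m ∈ Finset.range (n+1),
      (if n ≤ 2*m+2 ∧ 2*m+1 ≤ n then n.choose (m+1) else 0) with hS2
  set E := ∑ m ∈ Finset.range (n+1),
      (if n ≤ 2*m ∧ 2*m ≤ n+1 then n.choose m else 0) with hE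
  have peel2 : G (n+1) 0 = S1 + S2 + (if n ≤ 0 then 1 else 0) := by
    rw [peel]
    congr 1
    · rw [hS1, hS2, ← Finset.sum_add_distrib]
      apply Finset.sum_congr rfl
      intro m _
      have hcond : (n+1 ≤ 2*(m+1)+0+1 ∧ 2*(m+1) ≤ (n+1)+0)
          ↔ (n ≤ 2*m+2 ∧ 2*m+1 ≤ n) := by omega
      by_cases h : n ≤ 2*m+2 ∧ 2*m+1 ≤ n
      · rw [if_pos (hcond.mpr h), if_pos h, if_pos h, Nat.choose_succ_succ]
      · rw [if_neg (fun hh => h (hcond.mp hh)), if_neg h, if_neg h]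
    · rw [Nat.choose_zero_right]
      split_ifs <;> omega
  have claim1 : S1 + E = G n 1 := by
    rw [hS1, hE, G, ← Finset.sum_add_distrib]
    apply Finset.sum_congr rfl
    intro m _
    split_ifs <;> omega
  have claim2 : S2 + (if n ≤ 0 then 1 else 0) = E := by
    have e1 : (∑ m ∈ Finset.range (n+2),
        (if 1 ≤ m ∧ n ≤ 2*m ∧ 2*m ≤ n+1 then n.choose m else 0)) = S2 := by
      rw [Finset.sum_range_succ' _ (n+1)]
      have last0 : (if 1 ≤ (0:ℕ) ∧ n ≤ 2*0 ∧ 2*0 ≤ n+1 then n.choose 0 else 0) = 0 := by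
        rw [if_neg (by omega)]
      rw [last0, add_zero, hS2]
      apply Finset.sum_congr rfl
      intro m _
      have hcond : (1 ≤ m+1 ∧ n ≤ 2*(m+1) ∧ 2*(m+1) ≤ n+1)
          ↔ (n ≤ 2*m+2 ∧ 2*m+1 ≤ n) := by omega
      by_cases h : n ≤ 2*m+2 ∧ 2*m+1 ≤ n
      · rw [if_pos (hcond.mpr h), if_pos h]
      · rw [if_neg (fun hh => h (hcond.mp hh)), if_neg h]
    have e2 : (∑ m ∈ Finset.range (n+2),
        (if 1 ≤ m ∧ n ≤ 2*m ∧ 2*m ≤ n+1 then n.choose m else 0))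
        = ∑ m ∈ Finset.range (n+1),
          (if 1 ≤ m ∧ n ≤ 2*m ∧ 2*m ≤ n+1 then n.choose m else 0) := by
      rw [Finset.sum_range_succ]
      simp [Nat.choose_succ_self]
    have e3 : (∑ m ∈ Finset.range (n+1),
          (if 1 ≤ m ∧ n ≤ 2*m ∧ 2*m ≤ n+1 then n.choose m else 0))
        + (∑ m ∈ Finset.range (n+1), (if m = 0 ∧ n ≤ 0 then n.choose m else 0))
        = E := by
      rw [hE, ← Finset.sum_add_distrib]
      apply Finset.sum_congr rfl
      intro m _
      split_ifs <;> omega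
    have e4 : (∑ m ∈ Finset.range (n+1), (if m = 0 ∧ n ≤ 0 then n.choose m else 0))
        = (if n ≤ 0 then 1 else 0) := by
      rw [Finset.sum_eq_single_of_mem 0 (by simp)]
      · simp
      · intro m _ hm
        rw [if_neg (by tauto)]
    omega
  omega

lemma F_card : ∀ n k, (F n k).card = G n k := by
  intro n
  induction n with
  | zero =>
    intro k
    have : F 0 k = {[]} := by
      rw [F]
      have : WS 0 = {[]} := rfl
      rw [this]
      apply Finset.filter_true_of_mem
      intro r hr
      rw [Finset.mem_singleton] at hr
      subst hr
      rfl
    rw [this, G]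
    simp
  | succ n ih =>
    intro k
    rw [F_card_succ]
    rcases Nat.eq_zero_or_pos k with rfl | hk
    · rw [if_neg (by omega), ih, add_zero, G_succ_zero]
    · obtain ⟨k', rfl⟩ : ∃ k', k = k' + 1 := ⟨k - 1, by omega⟩
      rw [if_pos (by omega), ih, ih]
      have : k' + 1 - 1 = k' := by omega
      rw [this, G_succ_succ]

lemma G_center (n : ℕ) : G n 0 = n.choose (n / 2) := by
  rw [G]
  rw [Finset.sum_eq_single_of_mem (n / 2) (by rw [Finset.mem_range]; omega)]
  · rw [if_pos (by omega)]
  · intro m _ hm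
    rw [if_neg (by omega)]

end Aux16

open Plactic in
theorem stmt_16 (n : ℕ) :
    {w : List ℕ | w.length = n ∧ (∀ x ∈ w, x = 1 ∨ x = 2) ∧ w ∈ Cent [1]}.ncard =
      Nat.choose n (n / 2) := by
  classical
  have hset : {w : List ℕ | w.length = n ∧ (∀ x ∈ w, x = 1 ∨ x = 2) ∧ w ∈ Cent [1]}
      = ↑((Aux16.F n 0).image List.reverse) := by
    ext w
    simp only [Finset.coe_image, Set.mem_image, Finset.mem_coe, Set.mem_setOf_eq]
    constructor
    · rintro ⟨hlen, hL, hcent⟩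
      refine ⟨w.reverse, ?_, List.reverse_reverse w⟩
      rw [Aux16.F, Finset.mem_filter]
      constructor
      · rw [Aux16.mem_WS]
        exact ⟨by simpa using hlen, fun z hz => hL z (by simpa using hz)⟩
      · rw [Aux16.okb_iff]
        have hD : Aux16.D w = 0 := (Aux16.char w hL).mp hcent
        rw [Aux16.D] at hD
        omega
    · rintro ⟨r, hr, rfl⟩
      rw [Aux16.F, Finset.mem_filter, Aux16.mem_WS, Aux16.okb_iff] at hr
      obtain ⟨⟨hlen, hLr⟩, hok⟩ := hr
      have hL : ∀ x ∈ r.reverse, x = 1 ∨ x = 2 := fun z hz => hLr z (by simpa using hz)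
      have hD : Aux16.D r.reverse = 0 := by
        rw [Aux16.D, List.reverse_reverse]
        omega
      exact ⟨by simpa using hlen, hL, (Aux16.char _ hL).mpr hD⟩
  rw [hset, Set.ncard_coe_finset,
    Finset.card_image_of_injective _ List.reverse_injective, Aux16.F_card, Aux16.G_center]
end

section
/- The number of Yamanouchi words of length n over the alphabet {1,2} is the central binomial coefficient C(n, ⌊n/2⌋). -/
namespace YamAux

open Finset

def SufOK (w : List ℕ) : Prop := ∀ s : List ℕ, s.IsSuffix w → s.count 2 ≤ s.count 1

lemma sufOK_cons {x : ℕ} {t : List ℕ} :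
    SufOK (x :: t) ↔ ((x :: t).count 2 ≤ (x :: t).count 1 ∧ SufOK t) := by
  constructor
  · intro h
    exact ⟨h _ (List.suffix_refl _), fun s hs => h s (hs.trans (List.suffix_cons x t))⟩
  · rintro ⟨h1, h2⟩ s hs
    rcases List.suffix_cons_iff.mp hs with rfl | hs
    · exact h1
    · exact h2 s hs

def F : ℕ → ℕ → Finset (List ℕ)
  | 0, 0 => {[]}
  | 0, _+1 => ∅
  | n+1, 0 => (F n 1).image (2 :: ·)
  | n+1, d+1 => (F n (d+2)).image (2 :: ·) ∪ (F n d).image (1 :: ·)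

lemma mem_F : ∀ {n d : ℕ} {w : List ℕ},
    w ∈ F n d ↔ w.length = n ∧ (∀ x ∈ w, x = 1 ∨ x = 2) ∧ SufOK w ∧
      w.count 1 = w.count 2 + d := by
  intro n
  induction n with
  | zero =>
    intro d w
    match d with
    | 0 =>
      simp only [F, mem_singleton]
      constructor
      · rintro rfl
        refine ⟨rfl, by simp, ?_, by simp⟩
        intro s hs; simp [List.suffix_nil.mp hs]
      · rintro ⟨hl, -⟩
        exact List.eq_nil_of_length_eq_zero hl
    | d+1 =>
      simp only [F, Finset.notMem_empty, false_iff]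
      rintro ⟨hl, -, hs, hc⟩
      have := List.eq_nil_of_length_eq_zero hl
      subst this
      simp at hc
  | succ n ih =>
    intro d w
    constructor
    · intro hw
      match d with
      | 0 =>
        simp only [F, mem_image] at hw
        obtain ⟨t, ht, rfl⟩ := hw
        obtain ⟨hl, ha, hs, hc⟩ := ih.mp ht
        refine ⟨by simp [hl], ?_, ?_, ?_⟩
        · intro x hx
          rcases List.mem_cons.mp hx with rfl | hx
          · exact Or.inr rfl
          · exact ha x hx
        · rw [sufOK_cons]
          refine ⟨?_, hs⟩
          simp [List.count_cons]; omega
        · simp [List.count_cons]; omega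
      | d+1 =>
        simp only [F, mem_union, mem_image] at hw
        rcases hw with ⟨t, ht, rfl⟩ | ⟨t, ht, rfl⟩
        · obtain ⟨hl, ha, hs, hc⟩ := ih.mp ht
          refine ⟨by simp [hl], ?_, ?_, ?_⟩
          · intro x hx
            rcases List.mem_cons.mp hx with rfl | hx
            · exact Or.inr rfl
            · exact ha x hx
          · rw [sufOK_cons]
            refine ⟨?_, hs⟩
            simp [List.count_cons]; omega
          · simp [List.count_cons]; omega
        · obtain ⟨hl, ha, hs, hc⟩ := ih.mp ht
          refine ⟨by simp [hl], ?_, ?_, ?_⟩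
          · intro x hx
            rcases List.mem_cons.mp hx with rfl | hx
            · exact Or.inl rfl
            · exact ha x hx
          · rw [sufOK_cons]
            refine ⟨?_, hs⟩
            simp [List.count_cons]; omega
          · simp [List.count_cons]; omega
    · rintro ⟨hl, ha, hs, hc⟩
      match w with
      | [] => simp at hl
      | x :: t =>
        have hts : SufOK t := (sufOK_cons.mp hs).2
        have hwhole : (x :: t).count 2 ≤ (x :: t).count 1 := (sufOK_cons.mp hs).1
        have htwhole : t.count 2 ≤ t.count 1 := hts t (List.suffix_refl t)
        have hta : ∀ y ∈ t, y = 1 ∨ y = 2 := fun y hy => ha y (List.mem_cons_of_mem x hy)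
        have htl : t.length = n := by simpa using hl
        rcases ha x ((List.mem_cons_self (a := x) (l := t))) with rfl | rfl
        · -- x = 1 : t has defect d - 1; impossible if d = 0
          have hc' : t.count 1 + 1 = t.count 2 + d := by
            simpa [List.count_cons] using hc
          match d with
          | 0 => omega
          | d+1 =>
            simp only [F, mem_union, mem_image]
            right
            exact ⟨t, ih.mpr ⟨htl, hta, hts, by omega⟩, rfl⟩
        · -- x = 2 : t has defect d + 1
          have hc' : t.count 1 = t.count 2 + 1 + d := by
            have := hc
            simp [List.count_cons] at this
            omega
          match d with
          | 0 =>
            simp only [F, mem_image]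
            exact ⟨t, ih.mpr ⟨htl, hta, hts, by omega⟩, rfl⟩
          | d+1 =>
            simp only [F, mem_union, mem_image]
            left
            exact ⟨t, ih.mpr ⟨htl, hta, hts, by omega⟩, rfl⟩


lemma count_add_count {w : List ℕ} (ha : ∀ x ∈ w, x = 1 ∨ x = 2) :
    w.count 1 + w.count 2 = w.length := by
  induction w with
  | nil => simp
  | cons x t ih =>
    have hx := ha x ((List.mem_cons_self (a := x) (l := t)))
    have := ih (fun y hy => ha y (List.mem_cons_of_mem x hy))
    rcases hx with rfl | rfl <;> simp [List.count_cons] <;> omega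

lemma F_empty_of_lt {n d : ℕ} (h : n < d) : F n d = ∅ := by
  ext w
  simp only [Finset.notMem_empty, iff_false, mem_F]
  rintro ⟨hl, ha, -, hc⟩
  have h1 : w.count 1 + w.count 2 = n := by rw [count_add_count ha, hl]
  omega

lemma F_empty_of_parity {n d : ℕ} (h : (n + d) % 2 = 1) : F n d = ∅ := by
  ext w
  simp only [Finset.notMem_empty, iff_false, mem_F]
  rintro ⟨hl, ha, -, hc⟩
  have h1 : w.count 1 + w.count 2 = n := by rw [count_add_count ha, hl]
  omega

lemma card_image_cons (x : ℕ) (s : Finset (List ℕ)) :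
    (s.image (x :: ·)).card = s.card :=
  Finset.card_image_of_injective _ (fun a b h => by simpa using h)

lemma card_F_zero (n : ℕ) : (F (n+1) 0).card = (F n 1).card := by
  rw [show F (n+1) 0 = (F n 1).image (2 :: ·) from rfl, card_image_cons]

lemma card_F_succ (n d : ℕ) :
    (F (n+1) (d+1)).card = (F n (d+2)).card + (F n d).card := by
  rw [show F (n+1) (d+1) = (F n (d+2)).image (2 :: ·) ∪ (F n d).image (1 :: ·) from rfl]
  rw [Finset.card_union_of_disjoint, card_image_cons, card_image_cons]
  rw [Finset.disjoint_left]
  rintro w hw hw'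
  simp only [Finset.mem_image] at hw hw'
  obtain ⟨a, -, rfl⟩ := hw
  obtain ⟨b, -, hb⟩ := hw'
  simp at hb

lemma card_F_diag (n : ℕ) : (F (n+1) (n+1)).card = (F n n).card := by
  cases n with
  | zero =>
    show (F (0+1) (0+1)).card = (F 0 0).card
    rw [card_F_succ 0 0, show F 0 (0+2) = ∅ from rfl]
    simp
  | succ n =>
    show (F (n+1+1) (n+1+1)).card = (F (n+1) (n+1)).card
    rw [card_F_succ (n+1) (n+1), F_empty_of_lt (show n+1 < n+1+2 by omega)]
    simp

/-- Partial sums of the path counts. -/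
def T (n m : ℕ) : ℕ := ∑ k ∈ Finset.range m, (F n (n - 2*k)).card

lemma T_succ_self (n m : ℕ) : T n (m+1) = T n m + (F n (n - 2*m)).card := by
  rw [T, Finset.sum_range_succ, ← T]

lemma T_succ_step (n m : ℕ) (h : 2*m ≤ n + 1) :
    T (n+1) (m+1) = T n m + T n (m+1) := by
  induction m with
  | zero =>
    simp only [T, Finset.sum_range_one, Finset.sum_range_zero, Nat.mul_zero, Nat.sub_zero,
      Nat.zero_add]
    exact card_F_diag n
  | succ m ih =>
    have h' : 2*m ≤ n + 1 := by omega
    rw [T_succ_self, ih h']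
    have key : (F (n+1) (n+1 - 2*(m+1))).card
        = (F n (n - 2*m)).card + (F n (n - 2*(m+1))).card := by
      rcases Nat.lt_or_ge (2*(m+1)) (n+1) with hlt | hge
      · have hd : n + 1 - 2*(m+1) = (n - 2*(m+1)) + 1 := by omega
        rw [hd, card_F_succ, show n - 2*(m+1) + 2 = n - 2*m from by omega]
      · have hn : n + 1 = 2*(m+1) := by omega
        have h0 : n + 1 - 2*(m+1) = 0 := by omega
        rw [h0]
        cases n with
        | zero => omega
        | succ n' =>
          rw [card_F_zero]
          have e1 : n' + 1 - 2*m = 1 := by omega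
          have e2 : n' + 1 - 2*(m+1) = 0 := by omega
          rw [e1, e2]
          rw [F_empty_of_parity (show (n' + 1 + 0) % 2 = 1 by omega)]
          simp
    rw [key, T_succ_self n (m+1), T_succ_self n m]
    ring

lemma T_eq_choose : ∀ n m, 2*m ≤ n → T n (m+1) = n.choose m := by
  intro n
  induction n with
  | zero =>
    intro m hm
    have : m = 0 := by omega
    subst this
    simp [T, F]
  | succ n ih =>
    intro m hm
    rw [T_succ_step n m hm]
    cases m with
    | zero =>
      have h1 := ih 0 (Nat.zero_le n)
      have h0 : T n 0 = 0 := by simp [T]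
      rw [h0, Nat.zero_add, h1]
      simp
    | succ m' =>
      have h1 : T n (m'+1) = n.choose m' := ih m' (by omega)
      rcases Nat.lt_or_ge (2*(m'+1)) (n+1) with hlt | hge
      · have h2 : T n (m'+1+1) = n.choose (m'+1) := ih (m'+1) (by omega)
        rw [h1, h2, Nat.choose_succ_succ']
      · have hn : n = 2*m' + 1 := by omega
        have h2 : T n (m'+1+1) = T n (m'+1) + (F n (n - 2*(m'+1))).card :=
          T_succ_self n (m'+1)
        have h0 : n - 2*(m'+1) = 0 := by omega
        rw [h0] at h2
        rw [F_empty_of_parity (show (n + 0) % 2 = 1 by omega)] at h2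
        simp at h2
        rw [h2, h1]
        have hsym : n.choose (m'+1) = n.choose m' := by
          have := Nat.choose_symm (show m'+1 ≤ n by omega)
          rw [show n - (m'+1) = m' by omega] at this
          exact this.symm
        rw [Nat.choose_succ_succ', hsym]

end YamAux


theorem stmt_17 (n : ℕ) :
    {w : List ℕ | w.length = n ∧ (∀ x ∈ w, x = 1 ∨ x = 2) ∧
        ∀ s : List ℕ, s.IsSuffix w → s.count 2 ≤ s.count 1}.ncard =
      Nat.choose n (n / 2) := by
  classical
  have hset : {w : List ℕ | w.length = n ∧ (∀ x ∈ w, x = 1 ∨ x = 2) ∧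
        ∀ s : List ℕ, s.IsSuffix w → s.count 2 ≤ s.count 1} =
      ↑((Finset.range (n/2+1)).biUnion fun k => YamAux.F n (n - 2*k)) := by
    ext w
    simp only [Set.mem_setOf_eq, Finset.coe_biUnion, Set.mem_iUnion, Finset.mem_coe,
      Finset.mem_biUnion, Finset.mem_range, YamAux.mem_F]
    constructor
    · rintro ⟨hl, ha, hs⟩
      have hcc : w.count 1 + w.count 2 = w.length := YamAux.count_add_count ha
      have h2 : w.count 2 ≤ w.count 1 := hs w (List.suffix_refl w)
      exact ⟨w.count 2, by omega, hl, ha, hs, by omega⟩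
    · rintro ⟨k, hk, hl, ha, hs, -⟩
      exact ⟨hl, ha, hs⟩
  rw [hset, Set.ncard_coe_finset]
  rw [Finset.card_biUnion]
  · have : ∑ k ∈ Finset.range (n/2+1), (YamAux.F n (n - 2*k)).card = YamAux.T n (n/2+1) := rfl
    rw [this, YamAux.T_eq_choose n (n/2) (by omega)]
  · intro k hk k' hk' hne
    simp only [Finset.mem_coe, Finset.mem_range] at hk hk'
    rw [Function.onFun, Finset.disjoint_left]
    intro w hw hw'
    rw [YamAux.mem_F] at hw hw'
    obtain ⟨hl, ha, -, hc⟩ := hw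
    obtain ⟨-, -, -, hc'⟩ := hw'
    have hcc : w.count 1 + w.count 2 = w.length := YamAux.count_add_count ha
    have : k = k' := by omega
    exact hne this
end

section
/- If T is a semistandard Young tableau with all entries at most m, then T and ε_m(T) have the same shape, where ε_m(T) = P(RC_m(rw(T))) is the m-evacuation of T. -/
namespace Plactic

/-- A list of rows is a semistandard Young tableau: nonempty weakly increasing rows of
weakly decreasing lengths, with strictly increasing columns. -/
def IsSSYT (T : List (List ℕ)) : Prop :=
  (∀ r ∈ T, List.Pairwise (· ≤ ·) r) ∧
  (∀ i, (T.getD (i + 1) []).length ≤ (T.getD i []).length) ∧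
  (∀ (i j : ℕ) (x y : ℕ), (T.getD i [])[j]? = some x → (T.getD (i + 1) [])[j]? = some y → x < y) ∧
  (∀ r ∈ T, r ≠ [])

/-- The row reading word of a tableau: rows left to right, bottom row first. -/
def rowWord (T : List (List ℕ)) : List ℕ := T.reverse.flatten

/-- The `m`-reverse complement of a word. -/
def RC (m : ℕ) (w : List ℕ) : List ℕ := (w.map (fun x => m - x + 1)).reverse

/-- The `m`-evacuation of a tableau. -/
def evac (m : ℕ) (T : List (List ℕ)) : List (List ℕ) := P (RC m (rowWord T))

end Plactic

namespace Plactic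

/-! ### Generic helpers -/

lemma mem_of_getElem?' {l : List ℕ} {j a : ℕ} (h : l[j]? = some a) : a ∈ l := by
  have := List.getElem?_eq_some_iff.1 h
  rcases this with ⟨hj, rfl⟩
  exact List.getElem_mem hj

lemma getElem?_mid_eq (u v : List ℕ) (x : ℕ) : (u ++ x :: v)[u.length]? = some x := by
  rw [List.getElem?_append_right le_rfl]; simp

lemma getElem?_mid_ne (u v : List ℕ) (x z : ℕ) {j : ℕ} (h : j ≠ u.length) :
    (u ++ x :: v)[j]? = (u ++ z :: v)[j]? := by
  rcases lt_or_ge j u.length with h' | h'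
  · rw [List.getElem?_append_left h', List.getElem?_append_left h']
  · have h2 : u.length < j := lt_of_le_of_ne h' (Ne.symm h)
    rw [List.getElem?_append_right h', List.getElem?_append_right h']
    have h3 : j - u.length = (j - u.length - 1) + 1 := by omega
    rw [h3]; simp

lemma pairwise_three {R : ℕ → ℕ → Prop} {X M Y : List ℕ} :
    (X ++ M ++ Y).Pairwise R ↔
      X.Pairwise R ∧ M.Pairwise R ∧ Y.Pairwise R ∧
      (∀ a ∈ X, ∀ b ∈ M, R a b) ∧ (∀ a ∈ X, ∀ b ∈ Y, R a b) ∧ (∀ a ∈ M, ∀ b ∈ Y, R a b) := by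
  rw [List.append_assoc, List.pairwise_append, List.pairwise_append]
  constructor
  · rintro ⟨h1, ⟨h2, h3, h4⟩, h5⟩
    exact ⟨h1, h2, h3, fun a ha b hb => h5 a ha b (by simp [hb]),
      fun a ha b hb => h5 a ha b (by simp [hb]), h4⟩
  · rintro ⟨h1, h2, h3, h4, h5, h6⟩
    refine ⟨h1, ⟨h2, h3, h6⟩, ?_⟩
    intro a ha b hb
    rcases List.mem_append.1 hb with hb | hb
    · exact h4 a ha b hb
    · exact h5 a ha b hb

/-! ### Knuth equivalence congruences -/

lemma krel {a b : List ℕ} (h : KStep a b) : KEquiv a b := Relation.EqvGen.rel _ _ h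
lemma ksymm {a b : List ℕ} (h : KEquiv a b) : KEquiv b a := Relation.EqvGen.symm _ _ h
lemma ktrans {a b c : List ℕ} (h1 : KEquiv a b) (h2 : KEquiv b c) : KEquiv a c :=
  Relation.EqvGen.trans _ _ _ h1 h2


lemma kstep_append_right {w w' : List ℕ} (z : List ℕ) (h : KStep w w') :
    KStep (w ++ z) (w' ++ z) := by
  cases h with
  | k1 x y a b c h1 h2 => simpa [List.append_assoc] using KStep.k1 x (y ++ z) a b c h1 h2
  | k2 x y a b c h1 h2 => simpa [List.append_assoc] using KStep.k2 x (y ++ z) a b c h1 h2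

lemma kstep_append_left {w w' : List ℕ} (z : List ℕ) (h : KStep w w') :
    KStep (z ++ w) (z ++ w') := by
  cases h with
  | k1 x y a b c h1 h2 => simpa [List.append_assoc] using KStep.k1 (z ++ x) y a b c h1 h2
  | k2 x y a b c h1 h2 => simpa [List.append_assoc] using KStep.k2 (z ++ x) y a b c h1 h2

lemma kequiv_append_right {w w' : List ℕ} (z : List ℕ) (h : KEquiv w w') :
    KEquiv (w ++ z) (w' ++ z) := by
  induction h with
  | rel a b hab => exact Relation.EqvGen.rel _ _ (kstep_append_right z hab)
  | refl a => exact Relation.EqvGen.refl _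
  | symm a b _ ih => exact Relation.EqvGen.symm _ _ ih
  | trans a b c _ _ ih1 ih2 => exact Relation.EqvGen.trans _ _ _ ih1 ih2

lemma kequiv_append_left {w w' : List ℕ} (z : List ℕ) (h : KEquiv w w') :
    KEquiv (z ++ w) (z ++ w') := by
  induction h with
  | rel a b hab => exact Relation.EqvGen.rel _ _ (kstep_append_left z hab)
  | refl a => exact Relation.EqvGen.refl _
  | symm a b _ ih => exact Relation.EqvGen.symm _ _ ih
  | trans a b c _ _ ih1 ih2 => exact Relation.EqvGen.trans _ _ _ ih1 ih2

lemma kequiv_cons {w w' : List ℕ} (a : ℕ) (h : KEquiv w w') : KEquiv (a :: w) (a :: w') :=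
  kequiv_append_left [a] h

lemma kequiv_of_eq {w w' : List ℕ} (h : w = w') : KEquiv w w' := h ▸ Relation.EqvGen.refl w

/-! ### Row bumping Knuth lemmas -/

lemma moveLeftBig {x y : ℕ} (hxy : x < y) :
    ∀ u : List ℕ, u.Pairwise (· ≤ ·) → (∀ t ∈ u, t ≤ x) →
      KEquiv (y :: (u ++ [x])) (u ++ [y, x]) := by
  intro u
  induction u with
  | nil => intro _ _; exact Relation.EqvGen.refl _
  | cons a u ih =>
    intro hs hu
    rcases hr : u ++ [x] with _ | ⟨h, t⟩
    · exact absurd hr (by simp)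
    have hhx : h ≤ x := by
      have : h ∈ u ++ [x] := by rw [hr]; exact List.mem_cons_self
      rcases List.mem_append.1 this with h' | h'
      · exact hu h (List.mem_cons_of_mem _ h')
      · simp at h'; omega
    have hah : a ≤ h := by
      have : h ∈ u ++ [x] := by rw [hr]; exact List.mem_cons_self
      rcases List.mem_append.1 this with h' | h'
      · exact (List.pairwise_cons.1 hs).1 h h'
      · simp at h'; subst h'; exact hu a (List.mem_cons_self)
    have step : KStep (a :: y :: h :: t) (y :: a :: h :: t) := by
      have := KStep.k1 [] t a h y hah (lt_of_le_of_lt hhx hxy)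
      simpa using this
    have e1 : y :: (a :: u ++ [x]) = y :: a :: h :: t := by simp [hr]
    have ih' : KEquiv (y :: (u ++ [x])) (u ++ [y, x]) :=
      ih hs.of_cons (fun t ht => hu t (List.mem_cons_of_mem _ ht))
    have c1 : KEquiv (a :: (y :: (u ++ [x]))) (a :: (u ++ [y, x])) := kequiv_cons a ih'
    have e2 : a :: (y :: (u ++ [x])) = a :: y :: h :: t := by simp [hr]
    have e3 : a :: (u ++ [y, x]) = (a :: u) ++ [y, x] := by simp
    exact ktrans (kequiv_of_eq e1) (ktrans (ksymm (krel step))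
      (ktrans (kequiv_of_eq e2.symm) (ktrans c1 (kequiv_of_eq e3))))

lemma moveXright {x : ℕ} :
    ∀ (v : List ℕ) (c : ℕ), (c :: v).Pairwise (· ≤ ·) → x < c →
      KEquiv (c :: x :: v) ((c :: v) ++ [x]) := by
  intro v
  induction v with
  | nil => intro c _ _; exact Relation.EqvGen.refl _
  | cons d v ih =>
    intro c hs hxc
    have hcd : c ≤ d := (List.pairwise_cons.1 hs).1 d (List.mem_cons_self)
    have step : KStep (c :: x :: d :: v) (c :: d :: x :: v) := by
      have := KStep.k2 [] v x c d hxc hcd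
      simpa using this
    have ih' : KEquiv (d :: x :: v) ((d :: v) ++ [x]) :=
      ih d hs.of_cons (lt_of_lt_of_le hxc hcd)
    have c1 : KEquiv (c :: (d :: x :: v)) (c :: ((d :: v) ++ [x])) := kequiv_cons c ih'
    exact ktrans (krel step) (ktrans c1 (kequiv_of_eq (by simp)))

lemma bump_kequiv {u v : List ℕ} {x z : ℕ} (hs : (u ++ z :: v).Pairwise (· ≤ ·))
    (hu : ∀ t ∈ u, t ≤ x) (hxz : x < z) :
    KEquiv (z :: (u ++ x :: v)) ((u ++ z :: v) ++ [x]) := by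
  have hsu : u.Pairwise (· ≤ ·) := hs.sublist (List.sublist_append_left _ _)
  have hsv : (z :: v).Pairwise (· ≤ ·) := hs.sublist (List.sublist_append_right _ _)
  have s1 : KEquiv ((z :: (u ++ [x])) ++ v) ((u ++ [z, x]) ++ v) :=
    kequiv_append_right v (moveLeftBig hxz u hsu hu)
  have s2 : KEquiv (u ++ (z :: x :: v)) (u ++ ((z :: v) ++ [x])) :=
    kequiv_append_left u (moveXright v z hsv hxz)
  refine ktrans (kequiv_of_eq ?_) (ktrans s1 (ktrans (kequiv_of_eq ?_) (ktrans s2 (kequiv_of_eq ?_))))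
  · simp
  · simp
  · simp

end Plactic

namespace Plactic

/-! ### SSYT structure lemmas -/

lemma getD_nil' (n : ℕ) : (([] : List (List ℕ)).getD n []) = [] := by cases n <;> rfl

lemma isSSYT_nil : IsSSYT [] := by
  refine ⟨by simp, fun i => ?_, fun i j x y hx hy => ?_, by simp⟩
  · rw [getD_nil', getD_nil']
  · rw [getD_nil'] at hx; simp at hx

lemma getD_zero_eq_headD (rs : List (List ℕ)) : rs.getD 0 [] = rs.headD [] := by
  cases rs <;> rfl

lemma isSSYT_cons_iff {r : List ℕ} {rs : List (List ℕ)} :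
    IsSSYT (r :: rs) ↔
      r.Pairwise (· ≤ ·) ∧ r ≠ [] ∧ IsSSYT rs ∧ (rs.headD []).length ≤ r.length ∧
      (∀ (j a b : ℕ), r[j]? = some a → (rs.headD [])[j]? = some b → a < b) := by
  constructor
  · rintro ⟨h1, h2, h3, h4⟩
    refine ⟨h1 r (List.mem_cons_self), h4 r (List.mem_cons_self),
      ⟨fun r' hr' => h1 r' (List.mem_cons_of_mem _ hr'), fun i => h2 (i + 1),
        fun i j x y hx hy => h3 (i + 1) j x y hx hy,
        fun r' hr' => h4 r' (List.mem_cons_of_mem _ hr')⟩, ?_, fun j a b ha hb => ?_⟩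
    · have h5 : (rs.getD 0 []).length ≤ r.length := h2 0
      rwa [getD_zero_eq_headD] at h5
    · refine h3 0 j a b ha ?_
      show (rs.getD 0 [])[j]? = some b
      rw [getD_zero_eq_headD]; exact hb
  · rintro ⟨hs, hne, ⟨t1, t2, t3, t4⟩, hlen, hcol⟩
    refine ⟨?_, ?_, ?_, ?_⟩
    · intro r' hr'
      rcases List.mem_cons.1 hr' with rfl | hr'
      · exact hs
      · exact t1 r' hr'
    · intro i
      cases i with
      | zero =>
        show (rs.getD 0 []).length ≤ r.length
        rw [getD_zero_eq_headD]; exact hlen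
      | succ i => exact t2 i
    · intro i j x y hx hy
      cases i with
      | zero =>
        refine hcol j x y hx ?_
        rw [← getD_zero_eq_headD]; exact hy
      | succ i => exact t3 i j x y hx hy
    · intro r' hr'
      rcases List.mem_cons.1 hr' with rfl | hr'
      · exact hne
      · exact t4 r' hr'

/-! ### Row insertion spec -/

inductive RIspec (x : ℕ) : List ℕ → List ℕ × Option ℕ → Prop
  | app (r : List ℕ) (h : ∀ t ∈ r, t ≤ x) : RIspec x r (r ++ [x], none)
  | bump (u v : List ℕ) (z : ℕ) (hu : ∀ t ∈ u, t ≤ x) (hxz : x < z) :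
      RIspec x (u ++ z :: v) (u ++ x :: v, some z)

lemma rowInsert_spec (x : ℕ) : ∀ r : List ℕ, RIspec x r (rowInsert x r) := by
  intro r
  induction r with
  | nil => simpa [rowInsert] using RIspec.app [] (by simp)
  | cons y ys ih =>
    by_cases h : x < y
    · have e : rowInsert x (y :: ys) = (x :: ys, some y) := by simp [rowInsert, h]
      rw [e]
      simpa using RIspec.bump [] ys y (by simp) h
    · have e : rowInsert x (y :: ys) = (y :: (rowInsert x ys).1, (rowInsert x ys).2) := by
        simp [rowInsert, h]
      rw [e]
      generalize hq : rowInsert x ys = q at ih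
      cases ih with
      | app _ ha =>
        have : (y :: (ys ++ [x]), (none : Option ℕ)) = ((y :: ys) ++ [x], none) := by simp
        rw [this]
        exact RIspec.app (y :: ys) (by
          intro t ht
          rcases List.mem_cons.1 ht with rfl | ht
          · omega
          · exact ha t ht)
      | bump u v z hu hxz =>
        have e1 : (y :: (u ++ x :: v), some z) = ((y :: u) ++ x :: v, some z) := by simp
        have e2 : y :: (u ++ z :: v) = (y :: u) ++ z :: v := by simp
        rw [e1, e2]
        exact RIspec.bump (y :: u) v z (by
            intro t ht
            rcases List.mem_cons.1 ht with rfl | ht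
            · omega
            · exact hu t ht) hxz

lemma tInsert_cons_app {x : ℕ} {r r' : List ℕ} {rs : List (List ℕ)}
    (h : rowInsert x r = (r', none)) : tInsert x (r :: rs) = r' :: rs := by
  unfold tInsert; rw [h]

lemma tInsert_cons_bump {x z : ℕ} {r r' : List ℕ} {rs : List (List ℕ)}
    (h : rowInsert x r = (r', some z)) : tInsert x (r :: rs) = r' :: tInsert z rs := by
  rw [show tInsert x (r :: rs) = (match rowInsert x r with
    | (r', none) => r' :: rs
    | (r', some y) => r' :: tInsert y rs) from rfl, h]

/-- What insertion does to the top row. -/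
def BumpSpec (r0 : List ℕ) (U : List (List ℕ)) (y : ℕ) : Prop :=
  (∃ u v z, r0 = u ++ z :: v ∧ U.headD [] = u ++ y :: v ∧ (∀ t ∈ u, t ≤ y) ∧ y < z) ∨
  (U.headD [] = r0 ++ [y] ∧ ∀ t ∈ r0, t ≤ y)

theorem tInsert_good : ∀ (T : List (List ℕ)), IsSSYT T → ∀ x : ℕ,
    IsSSYT (tInsert x T) ∧ BumpSpec (T.headD []) (tInsert x T) x := by
  intro T
  induction T with
  | nil =>
    intro _ x
    constructor
    · rw [show tInsert x [] = [[x]] from rfl, isSSYT_cons_iff]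
      exact ⟨by simp, by simp, isSSYT_nil, by simp, by intro j a b _ hb; simp at hb⟩
    · right; simp [tInsert]
  | cons r rs ih =>
    intro hT x
    rw [isSSYT_cons_iff] at hT
    obtain ⟨hs, hne, hrs, hlen, hcol⟩ := hT
    have hspec := rowInsert_spec x r
    generalize hq : rowInsert x r = q at hspec
    cases hspec with
    | app _ ha =>
      -- appended at the end of the first row
      rw [tInsert_cons_app hq]
      constructor
      · rw [isSSYT_cons_iff]
        refine ⟨?_, by simp, hrs,
          by simp only [List.length_append, List.length_cons, List.length_nil]; omega, ?_⟩
        · exact List.pairwise_append.2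
            ⟨hs, by simp, by intro t ht b hb; simp at hb; subst hb; exact ha t ht⟩
        · intro j a b hj hb
          have hblen : j < (rs.headD []).length := (List.getElem?_eq_some_iff.1 hb).1
          have hjr : j < r.length := lt_of_lt_of_le hblen hlen
          rw [List.getElem?_append_left hjr] at hj
          exact hcol j a b hj hb
      · right
        exact ⟨by simp, ha⟩
    | bump u v z hu hxz =>
      rw [tInsert_cons_bump hq]
      obtain ⟨hU, hB⟩ := ih hrs z
      constructor
      · rw [isSSYT_cons_iff]
        refine ⟨?_, by simp, hU, ?_, ?_⟩
        · -- sortedness of u ++ x :: v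
          have hs2 : List.Pairwise (· ≤ ·) (u ++ z :: v) := hs
          rw [List.pairwise_append] at hs2
          obtain ⟨hsu, hsv, hcross⟩ := hs2
          refine List.pairwise_append.2 ⟨hsu, ?_, ?_⟩
          · rw [List.pairwise_cons] at hsv ⊢
            exact ⟨fun b hb => le_of_lt (lt_of_lt_of_le hxz (hsv.1 b hb)), hsv.2⟩
          · intro t ht b hb
            rcases List.mem_cons.1 hb with rfl | hb
            · exact hu t ht
            · exact hcross t ht b (List.mem_cons_of_mem _ hb)
        · -- length condition
          rcases hB with ⟨u2, v2, z2, h1, h2, _, _⟩ | ⟨h1, h2⟩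
          · have e0 : ((tInsert z rs).headD []).length = (rs.headD []).length := by
              rw [h1, h2]; simp
            rw [e0]
            exact le_trans hlen (le_of_eq (by simp))
          · -- appended: need (rs.headD []).length ≤ u.length
            have hle : (rs.headD []).length ≤ u.length := by
              by_contra hlt
              push_neg at hlt
              have hz : (u ++ z :: v)[u.length]? = some z := getElem?_mid_eq u v z
              obtain ⟨b, hb⟩ : ∃ b, (rs.headD [])[u.length]? = some b := by
                have : u.length < (rs.headD []).length := hlt
                exact ⟨_, List.getElem?_eq_getElem this⟩
              have h3 := hcol u.length z b hz hb
              have h4 : b ∈ rs.headD [] := mem_of_getElem?' hb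
              have := h2 b h4
              omega
            rw [h1]
            simp only [List.length_append, List.length_cons, List.length_nil] at hlen ⊢
            omega
        · -- column condition between u ++ x :: v and head of tInsert z rs
          rcases hB with ⟨u2, v2, z2, h1, h2, h3, h4⟩ | ⟨h1, h2⟩
          · -- bump case below
            have hi2 : u2.length ≤ u.length := by
              by_contra hlt
              push_neg at hlt
              have hz : (u ++ z :: v)[u.length]? = some z := getElem?_mid_eq u v z
              have ht' : (rs.headD [])[u.length]? = u2[u.length]? := by
                rw [h1]; exact List.getElem?_append_left hlt
              obtain ⟨t', ht2⟩ : ∃ t', u2[u.length]? = some t' :=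
                ⟨_, List.getElem?_eq_getElem hlt⟩
              have h5 := hcol u.length z t' hz (by rw [ht', ht2])
              have h6 : t' ∈ u2 := mem_of_getElem?' ht2
              have := h3 t' h6
              omega
            intro j a b hja hjb
            rw [h2] at hjb
            by_cases hj : j = u2.length
            · subst hj
              have hbz : b = z := by
                have := getElem?_mid_eq u2 v2 z
                rw [this] at hjb; exact (Option.some_inj.1 hjb).symm
              subst hbz
              rcases lt_or_eq_of_le hi2 with hlt | heq
              · have : (u ++ x :: v)[u2.length]? = u[u2.length]? := List.getElem?_append_left hlt
                rw [this] at hja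
                have : a ∈ u := mem_of_getElem?' hja
                have := hu a this
                omega
              · rw [heq] at hja
                have := getElem?_mid_eq u v x
                rw [this] at hja
                have : a = x := (Option.some_inj.1 hja).symm
                omega
            · have hjb' : (rs.headD [])[j]? = some b := by
                rw [h1, getElem?_mid_ne u2 v2 z2 z hj]
                exact hjb
              by_cases hju : j = u.length
              · subst hju
                have hax : a = x := by
                  have := getElem?_mid_eq u v x
                  rw [this] at hja; exact (Option.some_inj.1 hja).symm
                have hz : (u ++ z :: v)[u.length]? = some z := getElem?_mid_eq u v z
                have := hcol u.length z b hz hjb'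
                omega
              · have hja' : (u ++ z :: v)[j]? = some a := by
                  rw [getElem?_mid_ne u v z x hju]
                  exact hja
                exact hcol j a b hja' hjb'
          · -- append case below
            have hle : (rs.headD []).length ≤ u.length := by
              by_contra hlt
              push_neg at hlt
              have hz : (u ++ z :: v)[u.length]? = some z := getElem?_mid_eq u v z
              obtain ⟨b, hb⟩ : ∃ b, (rs.headD [])[u.length]? = some b :=
                ⟨_, List.getElem?_eq_getElem hlt⟩
              have h3 := hcol u.length z b hz hb
              have h4 := h2 b (mem_of_getElem?' hb)
              omega
            intro j a b hja hjb
            rw [h1] at hjb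
            rcases lt_trichotomy j (rs.headD []).length with hj | hj | hj
            · have hjb' : (rs.headD [])[j]? = some b := by
                rw [List.getElem?_append_left hj] at hjb; exact hjb
              have hja' : (u ++ z :: v)[j]? = some a := by
                rw [getElem?_mid_ne u v z x (by omega)]
                exact hja
              exact hcol j a b hja' hjb'
            · have hbz : b = z := by
                have : (rs.headD [] ++ [z])[j]? = some z := by
                  rw [hj]
                  have := getElem?_mid_eq (rs.headD []) [] z
                  simpa using this
                rw [this] at hjb; exact (Option.some_inj.1 hjb).symm
              subst hbz
              rcases lt_or_eq_of_le (hj ▸ hle : j ≤ u.length) with hlt | heq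
              · have : (u ++ x :: v)[j]? = u[j]? := List.getElem?_append_left hlt
                rw [this] at hja
                have := hu a (mem_of_getElem?' hja)
                omega
              · rw [heq] at hja
                have := getElem?_mid_eq u v x
                rw [this] at hja
                have : a = x := (Option.some_inj.1 hja).symm
                omega
            · exfalso
              have : (rs.headD [] ++ [z])[j]? = none := by
                apply List.getElem?_eq_none
                simp only [List.length_append, List.length_cons, List.length_nil]
                omega
              rw [this] at hjb
              exact absurd hjb (by simp)
      · -- BumpSpec for the whole insertion
        left
        exact ⟨u, v, z, rfl, by simp, hu, hxz⟩

end Plactic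

namespace Plactic

lemma P_append_singleton (w : List ℕ) (x : ℕ) : P (w ++ [x]) = tInsert x (P w) := by
  simp [P]

lemma P_isSSYT (w : List ℕ) : IsSSYT (P w) := by
  induction w using List.reverseRecOn with
  | nil => exact isSSYT_nil
  | append_singleton w x ih =>
    rw [P_append_singleton]
    exact (tInsert_good _ ih x).1

lemma rowWord_cons (r : List ℕ) (rs : List (List ℕ)) :
    rowWord (r :: rs) = rowWord rs ++ r := by
  simp [rowWord]

lemma tInsert_rw : ∀ (T : List (List ℕ)), IsSSYT T → ∀ x : ℕ,
    KEquiv (rowWord (tInsert x T)) (rowWord T ++ [x]) := by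
  intro T
  induction T with
  | nil =>
    intro _ x
    exact kequiv_of_eq (by simp [rowWord, tInsert])
  | cons r rs ih =>
    intro hT x
    rw [isSSYT_cons_iff] at hT
    obtain ⟨hs, hne, hrs, hlen, hcol⟩ := hT
    have hspec := rowInsert_spec x r
    generalize hq : rowInsert x r = q at hspec
    cases hspec with
    | app _ ha =>
      rw [tInsert_cons_app hq]
      exact kequiv_of_eq (by simp [rowWord_cons])
    | bump u v z hu hxz =>
      rw [tInsert_cons_bump hq]
      have ih' : KEquiv (rowWord (tInsert z rs)) (rowWord rs ++ [z]) := ih hrs z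
      have c1 : KEquiv (rowWord (tInsert z rs) ++ (u ++ x :: v))
          ((rowWord rs ++ [z]) ++ (u ++ x :: v)) := kequiv_append_right _ ih'
      have c2 : KEquiv (rowWord rs ++ (z :: (u ++ x :: v)))
          (rowWord rs ++ ((u ++ z :: v) ++ [x])) :=
        kequiv_append_left _ (bump_kequiv hs hu hxz)
      refine ktrans (kequiv_of_eq (rowWord_cons _ _)) (ktrans c1 ?_)
      refine ktrans (kequiv_of_eq (by simp)) (ktrans c2 (kequiv_of_eq ?_))
      rw [rowWord_cons]
      simp

lemma P_rw (w : List ℕ) : KEquiv w (rowWord (P w)) := by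
  induction w using List.reverseRecOn with
  | nil => exact kequiv_of_eq (by simp [P, rowWord])
  | append_singleton w x ih =>
    rw [P_append_singleton]
    refine ktrans (kequiv_append_right [x] ih) ?_
    exact ksymm (tInsert_rw (P w) (P_isSSYT w) x)

end Plactic

namespace Plactic

/-! ### Colorings: disjoint strictly decreasing subsequences -/

/-- The subsequence of `w` colored `j` by `cs`. -/
def classOf (w : List ℕ) (cs : List (Option ℕ)) (j : ℕ) : List ℕ :=
  ((w.zip cs).filter (fun p => p.2 = some j)).map Prod.fst

/-- A valid coloring with `k` colors whose classes are strictly decreasing. -/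
def Valid (k : ℕ) (w : List ℕ) (cs : List (Option ℕ)) : Prop :=
  cs.length = w.length ∧ (∀ j : ℕ, some j ∈ cs → j < k) ∧
  ∀ j : ℕ, (classOf w cs j).Pairwise (· > ·)

/-- There is a valid `k`-coloring of `w` with exactly `s` colored positions. -/
def Reach (k s : ℕ) (w : List ℕ) : Prop :=
  ∃ cs, Valid k w cs ∧ cs.countP Option.isSome = s

lemma classOf_nil_left (cs : List (Option ℕ)) (j : ℕ) : classOf [] cs j = [] := by
  simp [classOf]

lemma classOf_nil_right (w : List ℕ) (j : ℕ) : classOf w [] j = [] := by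
  simp [classOf]

lemma classOf_cons (a : ℕ) (w : List ℕ) (o : Option ℕ) (cs : List (Option ℕ)) (j : ℕ) :
    classOf (a :: w) (o :: cs) j = (if o = some j then [a] else []) ++ classOf w cs j := by
  by_cases h : o = some j <;> simp [classOf, List.filter_cons, h]

lemma classOf_append {w1 : List ℕ} {cs1 : List (Option ℕ)} (w2 : List ℕ) (cs2 : List (Option ℕ))
    (h : cs1.length = w1.length) (j : ℕ) :
    classOf (w1 ++ w2) (cs1 ++ cs2) j = classOf w1 cs1 j ++ classOf w2 cs2 j := by
  unfold classOf
  rw [List.zip_append h.symm, List.filter_append, List.map_append]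

lemma classOf_sublist (w : List ℕ) (cs : List (Option ℕ)) (j : ℕ) (h : cs.length = w.length) :
    (classOf w cs j).Sublist w := by
  have h1 := (List.filter_sublist (l := w.zip cs) (p := fun p => p.2 = some j)).map Prod.fst
  rwa [List.map_fst_zip (le_of_eq h.symm)] at h1

lemma length_classOf : ∀ (w : List ℕ) (cs : List (Option ℕ)) (j : ℕ), cs.length = w.length →
    (classOf w cs j).length = cs.count (some j) := by
  intro w
  induction w with
  | nil =>
    intro cs j h
    have : cs = [] := List.eq_nil_of_length_eq_zero (by simpa using h)
    subst this; simp [classOf]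
  | cons a w ih =>
    intro cs j h
    cases cs with
    | nil => simp at h
    | cons o cs =>
      rw [classOf_cons, List.count_cons, List.length_append, ih cs j (by simpa using h)]
      by_cases ho : o = some j <;> simp [ho] <;> omega

lemma count_filterMap_id : ∀ (cs : List (Option ℕ)) (j : ℕ),
    (cs.filterMap id).count j = cs.count (some j) := by
  intro cs j
  induction cs with
  | nil => simp
  | cons o cs ih =>
    cases o with
    | none => simpa [List.filterMap_cons, List.count_cons] using ih
    | some a =>
      simp only [List.filterMap_cons, id_eq, List.count_cons, ih]
      by_cases h : a = j <;> simp [h] <;> exact ih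

/-- At most `min k |b|` positions of a sorted block can be colored. -/
lemma colored_le_min {k : ℕ} {b : List ℕ} (hb : b.Pairwise (· ≤ ·)) {cs1 : List (Option ℕ)}
    (hlen : cs1.length = b.length)
    (hcls : ∀ j : ℕ, (classOf b cs1 j).Pairwise (· > ·))
    (hmem : ∀ j : ℕ, some j ∈ cs1 → j < k) :
    cs1.countP Option.isSome ≤ min k b.length := by
  refine le_min ?_ (le_trans (List.countP_le_length) (le_of_eq hlen))
  have hnd : (cs1.filterMap id).Nodup := by
    rw [List.nodup_iff_count_le_one]
    intro j
    by_contra hc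
    push_neg at hc
    have h2 : 2 ≤ cs1.count (some j) := by rw [← count_filterMap_id]; omega
    have h3 : 2 ≤ (classOf b cs1 j).length := by rw [length_classOf b cs1 j hlen]; omega
    have hgt := hcls j
    have hsort : (classOf b cs1 j).Pairwise (· ≤ ·) :=
      List.Pairwise.sublist (classOf_sublist b cs1 j hlen) hb
    rcases hcl : classOf b cs1 j with _ | ⟨a1, l⟩
    · rw [hcl] at h3; simp at h3
    rcases l with _ | ⟨a2, l2⟩
    · rw [hcl] at h3; simp at h3
    rw [hcl] at hgt hsort
    have g1 : a1 > a2 := (List.pairwise_cons.1 hgt).1 a2 (by simp)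
    have g2 : a1 ≤ a2 := (List.pairwise_cons.1 hsort).1 a2 (by simp)
    omega
  have hsub : (cs1.filterMap id).toFinset ⊆ Finset.range k := by
    intro j hj
    rw [List.mem_toFinset] at hj
    rcases List.mem_filterMap.1 hj with ⟨o, ho, hid⟩
    simp only [id] at hid
    subst hid
    rw [Finset.mem_range]
    exact hmem j ho
  have hcard : (cs1.filterMap id).length ≤ k := by
    rw [← List.toFinset_card_of_nodup hnd]
    calc (cs1.filterMap id).toFinset.card ≤ (Finset.range k).card := Finset.card_le_card hsub
      _ = k := Finset.card_range k
  have he : cs1.countP Option.isSome = (cs1.filterMap id).length := by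
    rw [List.length_filterMap_eq_countP]; rfl
  rw [he]; exact hcard

lemma blocks_upper (k : ℕ) : ∀ (B : List (List ℕ)), (∀ b ∈ B, b.Pairwise (· ≤ ·)) →
    ∀ cs, Valid k B.flatten cs →
      cs.countP Option.isSome ≤ (B.map (fun b => min k b.length)).sum := by
  intro B
  induction B with
  | nil =>
    intro _ cs hv
    have : cs = [] := List.eq_nil_of_length_eq_zero (by simpa using hv.1)
    subst this; simp
  | cons b B' ih =>
    intro hsort cs hv
    obtain ⟨hlen, hmem, hcls⟩ := hv
    have hcslen : cs.length = b.length + B'.flatten.length := by simpa using hlen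
    set cs1 := cs.take b.length with hcs1
    set cs2 := cs.drop b.length with hcs2
    have hsplit : cs = cs1 ++ cs2 := (List.take_append_drop _ _).symm
    have hlen1 : cs1.length = b.length := by
      rw [hcs1, List.length_take]; omega
    have hlen2 : cs2.length = B'.flatten.length := by
      rw [hcs2, List.length_drop]; omega
    have hfl : (b :: B').flatten = b ++ B'.flatten := rfl
    have hdecomp : ∀ j, classOf ((b :: B').flatten) cs j
        = classOf b cs1 j ++ classOf B'.flatten cs2 j := by
      intro j
      conv_lhs => rw [hsplit, hfl]
      exact classOf_append _ _ hlen1 j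
    have hv2 : Valid k B'.flatten cs2 := by
      refine ⟨hlen2, ?_, ?_⟩
      · intro j hj
        exact hmem j (by rw [hsplit]; exact List.mem_append_right _ hj)
      · intro j
        have h := hcls j
        rw [hdecomp j] at h
        exact (List.pairwise_append.1 h).2.1
    have hb1 : cs1.countP Option.isSome ≤ min k b.length := by
      refine colored_le_min (hsort b (List.mem_cons_self)) hlen1 ?_ ?_
      · intro j
        have h := hcls j
        rw [hdecomp j] at h
        exact (List.pairwise_append.1 h).1
      · intro j hj
        exact hmem j (by rw [hsplit]; exact List.mem_append_left _ hj)
    have hb2 := ih (fun r hr => hsort r (List.mem_cons_of_mem _ hr)) cs2 hv2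
    calc cs.countP Option.isSome
        = cs1.countP Option.isSome + cs2.countP Option.isSome := by
          rw [hsplit, List.countP_append]
      _ ≤ min k b.length + (B'.map (fun b => min k b.length)).sum := add_le_add hb1 hb2
      _ = ((b :: B').map (fun b => min k b.length)).sum := by simp

/-- Upper bound for reading words of SSYT. -/
lemma tableau_upper {k s : ℕ} {T : List (List ℕ)} (hT : IsSSYT T)
    (h : Reach k s (rowWord T)) : s ≤ (T.map (fun r => min k r.length)).sum := by
  obtain ⟨cs, hv, hc⟩ := h
  have h1 := blocks_upper k T.reverse
    (fun b hb => hT.1 b (List.mem_reverse.1 hb)) cs hv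
  rw [hc] at h1
  calc s ≤ (T.reverse.map (fun b => min k b.length)).sum := h1
    _ = (T.map (fun b => min k b.length)).sum := by
        rw [List.map_reverse, List.sum_reverse]

end Plactic

namespace Plactic

/-! ### The column coloring of a tableau -/

def colorRow (k : ℕ) : ℕ → List ℕ → List (Option ℕ)
  | _, [] => []
  | j, _ :: t => (if j < k then some j else none) :: colorRow k (j + 1) t

lemma length_colorRow (k : ℕ) : ∀ (j0 : ℕ) (r : List ℕ), (colorRow k j0 r).length = r.length := by
  intro j0 r
  induction r generalizing j0 with
  | nil => rfl
  | cons a t ih => simp [colorRow, ih]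

lemma mem_colorRow (k : ℕ) : ∀ (r : List ℕ) (j0 : ℕ) {j : ℕ},
    some j ∈ colorRow k j0 r → j < k := by
  intro r
  induction r with
  | nil => intro j0 j h; simp [colorRow] at h
  | cons a t ih =>
    intro j0 j h
    rcases List.mem_cons.1 h with h | h
    · by_cases hk : j0 < k
      · rw [if_pos hk] at h
        have : j0 = j := by
          have := h.symm
          simpa using this
        omega
      · rw [if_neg hk] at h; exact absurd h.symm (by simp)
    · exact ih (j0 + 1) h

lemma countP_colorRow (k : ℕ) : ∀ (r : List ℕ) (j0 : ℕ),
    (colorRow k j0 r).countP Option.isSome = min (k - j0) r.length := by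
  intro r
  induction r with
  | nil => intro j0; simp [colorRow]
  | cons a t ih =>
    intro j0
    rw [show colorRow k j0 (a :: t) = (if j0 < k then some j0 else none) :: colorRow k (j0 + 1) t
      from rfl, List.countP_cons, ih (j0 + 1)]
    by_cases h : j0 < k <;> simp [h] <;> omega

lemma classOf_colorRow (k : ℕ) : ∀ (r : List ℕ) (j0 j : ℕ),
    classOf r (colorRow k j0 r) j = if j0 ≤ j ∧ j < k then (r[j - j0]?).toList else [] := by
  intro r
  induction r with
  | nil =>
    intro j0 j
    rw [show colorRow k j0 [] = [] from rfl, classOf_nil_left]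
    split_ifs <;> simp
  | cons a t ih =>
    intro j0 j
    rw [show colorRow k j0 (a :: t) = (if j0 < k then some j0 else none) :: colorRow k (j0 + 1) t
      from rfl, classOf_cons, ih (j0 + 1) j]
    by_cases h2 : j0 = j
    · subst h2
      by_cases h1 : j0 < k
      · have hno : ¬(j0 + 1 ≤ j0 ∧ j0 < k) := by omega
        rw [if_pos h1, if_neg hno, if_pos (by omega : j0 ≤ j0 ∧ j0 < k)]
        simp
      · have hno : ¬(j0 + 1 ≤ j0 ∧ j0 < k) := by omega
        have hno2 : ¬(j0 ≤ j0 ∧ j0 < k) := by omega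
        rw [if_neg h1, if_neg hno, if_neg hno2]
        simp
    · have hne : (if j0 < k then some j0 else none) ≠ some j := by
        split_ifs with h1
        · intro hcon
          exact h2 (by simpa using hcon)
        · simp
      rw [if_neg hne, List.nil_append]
      by_cases h3 : j0 + 1 ≤ j ∧ j < k
      · rw [if_pos h3, if_pos ⟨by omega, h3.2⟩]
        have he : j - j0 = (j - j0 - 1) + 1 := by omega
        rw [he, List.getElem?_cons_succ]
        have he2 : j - (j0 + 1) = j - j0 - 1 := by omega
        rw [he2]
      · rw [if_neg h3, if_neg ?_]
        rintro ⟨ha, hb⟩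
        exact h3 ⟨by omega, hb⟩

lemma classOf_flatten (k j : ℕ) : ∀ (L : List (List ℕ)),
    classOf L.flatten ((L.map (fun r => colorRow k 0 r)).flatten) j
      = (L.map (fun r => classOf r (colorRow k 0 r) j)).flatten := by
  intro L
  induction L with
  | nil => simp [classOf]
  | cons r L ih =>
    simp only [List.map_cons, List.flatten_cons]
    rw [classOf_append _ _ (length_colorRow k 0 r), ih]

lemma flatten_toList (j : ℕ) : ∀ (L : List (List ℕ)),
    (L.map (fun r => (r[j]?).toList)).flatten = L.filterMap (fun r => r[j]?) := by
  intro L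
  induction L with
  | nil => simp
  | cons r L ih => cases h : r[j]? <;> simp [h, ih]

/-! ### Columns of an SSYT are strictly increasing -/

lemma col_cons (r : List ℕ) (rs : List (List ℕ)) (j : ℕ) :
    col (r :: rs) j = ((r[j]?).toList) ++ col rs j := by
  cases h : r[j]? <;> simp [col, List.filterMap_cons, h]

lemma col_empty : ∀ (T : List (List ℕ)), IsSSYT T → ∀ j, (T.headD []).length ≤ j →
    col T j = [] := by
  intro T
  induction T with
  | nil => intro _ j _; simp [col]
  | cons r rs ih =>
    intro hT j hj
    rw [isSSYT_cons_iff] at hT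
    obtain ⟨_, _, hrs, hlen, _⟩ := hT
    rw [col_cons]
    have hj' : r.length ≤ j := by simpa using hj
    have h1 : r[j]? = none := List.getElem?_eq_none hj'
    rw [h1, ih hrs j (le_trans hlen hj')]
    simp

lemma col_forall_lt : ∀ (rs : List (List ℕ)), IsSSYT rs → ∀ (a j : ℕ),
    (∀ b, (rs.headD [])[j]? = some b → a < b) → ∀ b ∈ col rs j, a < b := by
  intro rs
  induction rs with
  | nil => intro _ a j _ b hb; simp [col] at hb
  | cons r2 rs2 ih =>
    intro hT a j hhead b hb
    rw [isSSYT_cons_iff] at hT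
    obtain ⟨_, _, hrs2, hlen2, hcol2⟩ := hT
    rw [col_cons] at hb
    cases h2 : r2[j]? with
    | none =>
      rw [h2] at hb
      have hempty : col rs2 j = [] := by
        refine col_empty rs2 hrs2 j (le_trans hlen2 ?_)
        exact List.getElem?_eq_none_iff.1 h2
      rw [hempty] at hb
      simp at hb
    | some b0 =>
      rw [h2] at hb
      rcases List.mem_append.1 hb with hb | hb
      · have : b = b0 := by simpa using hb
        subst this
        exact hhead b (by simpa using h2)
      · refine ih hrs2 a j ?_ b hb
        intro b' hb'
        exact lt_trans (hhead b0 (by simpa using h2)) (hcol2 j b0 b' h2 hb')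

lemma col_pairwise : ∀ (T : List (List ℕ)), IsSSYT T → ∀ j, (col T j).Pairwise (· < ·) := by
  intro T
  induction T with
  | nil => intro _ j; simp [col]
  | cons r rs ih =>
    intro hT j
    have hT' := hT
    rw [isSSYT_cons_iff] at hT'
    obtain ⟨_, _, hrs, hlen, hcol⟩ := hT'
    rw [col_cons]
    cases h : r[j]? with
    | none => simpa using ih hrs j
    | some a =>
      simp only [Option.toList_some, List.singleton_append]
      refine List.pairwise_cons.2 ⟨?_, ih hrs j⟩
      exact col_forall_lt rs hrs a j (fun b hb => hcol j a b h hb)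

/-! ### The tableau coloring -/

def tabColoring (k : ℕ) (T : List (List ℕ)) : List (Option ℕ) :=
  (T.reverse.map (fun r => colorRow k 0 r)).flatten

lemma tabColoring_class (k : ℕ) (T : List (List ℕ)) (j : ℕ) :
    classOf (rowWord T) (tabColoring k T) j = if j < k then (col T j).reverse else [] := by
  have e1 : rowWord T = T.reverse.flatten := rfl
  rw [e1, tabColoring, classOf_flatten k j T.reverse]
  have e2 : ∀ r, classOf r (colorRow k 0 r) j = if j < k then (r[j]?).toList else [] := by
    intro r
    rw [classOf_colorRow]
    simp
  rw [List.map_congr_left (fun r _ => e2 r)]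
  by_cases h : j < k
  · simp only [if_pos h]
    rw [flatten_toList j T.reverse]
    show (T.reverse.filterMap (fun r => r[j]?)) = (col T j).reverse
    rw [List.filterMap_reverse]
    rfl
  · simp only [if_neg h]
    simp

lemma tabColoring_valid {T : List (List ℕ)} (hT : IsSSYT T) (k : ℕ) :
    Valid k (rowWord T) (tabColoring k T) := by
  refine ⟨?_, ?_, ?_⟩
  · simp only [tabColoring, rowWord, List.length_flatten, List.map_map]
    congr 1
    apply List.map_congr_left
    intro r _
    exact length_colorRow k 0 r
  · intro j hj
    rcases List.mem_flatten.1 hj with ⟨l, hl, hjl⟩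
    rcases List.mem_map.1 hl with ⟨r, _, rfl⟩
    exact mem_colorRow k r 0 hjl
  · intro j
    rw [tabColoring_class]
    split_ifs with h
    · rw [List.pairwise_reverse]
      exact col_pairwise T hT j
    · simp

lemma tabColoring_count (k : ℕ) (T : List (List ℕ)) :
    (tabColoring k T).countP Option.isSome = (T.map (fun r => min k r.length)).sum := by
  rw [tabColoring, List.countP_flatten, List.map_map]
  have e : (List.countP Option.isSome ∘ fun r => colorRow k 0 r)
      = fun r : List ℕ => min k r.length := by
    funext r
    simp only [Function.comp]
    rw [countP_colorRow]
    simp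
  rw [e, List.map_reverse, List.sum_reverse]

lemma tableau_reach {T : List (List ℕ)} (hT : IsSSYT T) (k : ℕ) :
    Reach k ((T.map (fun r => min k r.length)).sum) (rowWord T) :=
  ⟨tabColoring k T, tabColoring_valid hT k, tabColoring_count k T⟩

end Plactic

namespace Plactic

/-! ### Invariance of colorings under Knuth moves -/

def mid3 (a1 a2 a3 : ℕ) (o1 o2 o3 : Option ℕ) (j : ℕ) : List ℕ :=
  (if o1 = some j then [a1] else []) ++ (if o2 = some j then [a2] else []) ++
    (if o3 = some j then [a3] else [])

lemma classOf_three {x y : List ℕ} {cx cy : List (Option ℕ)} (a1 a2 a3 : ℕ)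
    (o1 o2 o3 : Option ℕ) (hcx : cx.length = x.length) (j : ℕ) :
    classOf (x ++ [a1, a2, a3] ++ y) (cx ++ [o1, o2, o3] ++ cy) j
      = classOf x cx j ++ mid3 a1 a2 a3 o1 o2 o3 j ++ classOf y cy j := by
  rw [List.append_assoc x, List.append_assoc cx, classOf_append _ _ hcx,
    classOf_append _ _ (by rfl : ([o1, o2, o3] : List (Option ℕ)).length = [a1, a2, a3].length)]
  simp only [mid3, classOf_cons, classOf_nil_left, List.append_nil, List.append_assoc]

lemma cs_split3 {cs : List (Option ℕ)} {x y : List ℕ} {p q r : ℕ}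
    (h : cs.length = (x ++ [p, q, r] ++ y).length) :
    ∃ cx o1 o2 o3 cy, cs = cx ++ [o1, o2, o3] ++ cy ∧
      cx.length = x.length ∧ cy.length = y.length := by
  have hlen : cs.length = x.length + (3 + y.length) := by
    rw [h]; simp; omega
  have h1 : cs = cs.take x.length ++ cs.drop x.length := (List.take_append_drop _ _).symm
  have hlen3 : (cs.drop x.length).length = 3 + y.length := by
    rw [List.length_drop]; omega
  have hlent : (cs.take x.length).length = x.length := by
    rw [List.length_take]; omega
  rcases hd : cs.drop x.length with _ | ⟨o1, r1⟩
  · rw [hd] at hlen3; simp at hlen3; omega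
  rcases r1 with _ | ⟨o2, r2⟩
  · rw [hd] at hlen3; simp at hlen3; omega
  rcases r2 with _ | ⟨o3, cy⟩
  · rw [hd] at hlen3; simp at hlen3; omega
  refine ⟨cs.take x.length, o1, o2, o3, cy, ?_, hlent, ?_⟩
  · conv_lhs => rw [h1, hd]
    simp
  · rw [hd] at hlen3; simp at hlen3; omega

lemma countP_split (cx cy l : List (Option ℕ)) :
    (cx ++ l ++ cy).countP Option.isSome
      = cx.countP Option.isSome + l.countP Option.isSome + cy.countP Option.isSome := by
  simp [List.countP_append]
  omega

/-! ### Color swapping -/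

def swapc (j1 j2 : ℕ) (o : Option ℕ) : Option ℕ :=
  if o = some j1 then some j2 else if o = some j2 then some j1 else o

def swapn (j1 j2 j : ℕ) : ℕ := if j = j1 then j2 else if j = j2 then j1 else j

lemma swapc_eq_some {j1 j2 j : ℕ} {o : Option ℕ} :
    swapc j1 j2 o = some j ↔ o = some (swapn j1 j2 j) := by
  unfold swapc swapn
  rcases o with _ | a
  · split_ifs <;> simp_all
  · split_ifs <;> simp_all <;> omega

lemma classOf_map_swapc (y : List ℕ) (cy : List (Option ℕ)) (j1 j2 j : ℕ) :
    classOf y (cy.map (swapc j1 j2)) j = classOf y cy (swapn j1 j2 j) := by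
  induction y generalizing cy with
  | nil => simp [classOf]
  | cons a w ih =>
    cases cy with
    | nil => simp [classOf]
    | cons o cs =>
      rw [List.map_cons, classOf_cons, classOf_cons, ih cs]
      congr 1
      by_cases h : swapc j1 j2 o = some j
      · rw [if_pos h, if_pos (swapc_eq_some.1 h)]
      · rw [if_neg h, if_neg (fun hh => h (swapc_eq_some.2 hh))]

lemma countP_map_swapc (cy : List (Option ℕ)) (j1 j2 : ℕ) :
    (cy.map (swapc j1 j2)).countP Option.isSome = cy.countP Option.isSome := by
  rw [List.countP_map]
  apply List.countP_congr
  intro o _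
  rcases o with _ | a <;> simp [swapc, Function.comp] <;> split_ifs <;> simp

lemma mem_map_swapc {cy : List (Option ℕ)} {j1 j2 j : ℕ} (h : some j ∈ cy.map (swapc j1 j2)) :
    some j ∈ cy ∨ j = j1 ∨ j = j2 := by
  rcases List.mem_map.1 h with ⟨o, ho, heq⟩
  rcases o with _ | a
  · simp [swapc] at heq
  · simp only [swapc] at heq
    split_ifs at heq with h1 h2
    · right; right; have : j2 = j := by simpa using heq
      omega
    · right; left; have : j1 = j := by simpa using heq
      omega
    · left; have : a = j := by simpa using heq
      subst this; exact ho

lemma mem_three {cx cy : List (Option ℕ)} {o1 o2 o3 o : Option ℕ} :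
    o ∈ cx ++ [o1, o2, o3] ++ cy ↔ o ∈ cx ∨ o = o1 ∨ o = o2 ∨ o = o3 ∨ o ∈ cy := by
  simp [List.mem_append, List.mem_cons]
  try tauto

/-! ### Easy swaps -/

lemma valid_swap12 {k : ℕ} {x y : List ℕ} {p q r : ℕ} {cx cy : List (Option ℕ)}
    {o1 o2 o3 : Option ℕ} (hcx : cx.length = x.length)
    (hne : ∀ j : ℕ, ¬(o1 = some j ∧ o2 = some j))
    (h : Valid k (x ++ [p, q, r] ++ y) (cx ++ [o1, o2, o3] ++ cy)) :
    Valid k (x ++ [q, p, r] ++ y) (cx ++ [o2, o1, o3] ++ cy) := by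
  obtain ⟨hlen, hmem, hcls⟩ := h
  refine ⟨by simpa using hlen, ?_, ?_⟩
  · intro j hj
    apply hmem j
    rw [mem_three] at hj ⊢
    tauto
  · intro j
    have hc := hcls j
    rw [classOf_three p q r o1 o2 o3 hcx j] at hc
    rw [classOf_three q p r o2 o1 o3 hcx j]
    have emid : mid3 q p r o2 o1 o3 j = mid3 p q r o1 o2 o3 j := by
      unfold mid3
      by_cases h1 : o1 = some j <;> by_cases h2 : o2 = some j
      · exact absurd ⟨h1, h2⟩ (hne j)
      all_goals simp [h1, h2]
    rw [emid]
    exact hc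

lemma valid_swap23 {k : ℕ} {x y : List ℕ} {p q r : ℕ} {cx cy : List (Option ℕ)}
    {o1 o2 o3 : Option ℕ} (hcx : cx.length = x.length)
    (hne : ∀ j : ℕ, ¬(o2 = some j ∧ o3 = some j))
    (h : Valid k (x ++ [p, q, r] ++ y) (cx ++ [o1, o2, o3] ++ cy)) :
    Valid k (x ++ [p, r, q] ++ y) (cx ++ [o1, o3, o2] ++ cy) := by
  obtain ⟨hlen, hmem, hcls⟩ := h
  refine ⟨by simpa using hlen, ?_, ?_⟩
  · intro j hj
    apply hmem j
    rw [mem_three] at hj ⊢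
    tauto
  · intro j
    have hc := hcls j
    rw [classOf_three p q r o1 o2 o3 hcx j] at hc
    rw [classOf_three p r q o1 o3 o2 hcx j]
    have emid : mid3 p r q o1 o3 o2 j = mid3 p q r o1 o2 o3 j := by
      unfold mid3
      by_cases h2 : o2 = some j <;> by_cases h3 : o3 = some j
      · exact absurd ⟨h2, h3⟩ (hne j)
      all_goals simp [h2, h3, List.append_assoc]
    rw [emid]
    exact hc

lemma countP_mid_perm12 (o1 o2 o3 : Option ℕ) :
    ([o2, o1, o3] : List (Option ℕ)).countP Option.isSome
      = [o1, o2, o3].countP Option.isSome := by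
  simp only [List.countP_cons, List.countP_nil]
  split_ifs <;> omega

lemma countP_mid_perm23 (o1 o2 o3 : Option ℕ) :
    ([o1, o3, o2] : List (Option ℕ)).countP Option.isSome
      = [o1, o2, o3].countP Option.isSome := by
  simp only [List.countP_cons, List.countP_nil]
  split_ifs <;> omega

end Plactic

namespace Plactic

lemma mid3_nil {a1 a2 a3 : ℕ} {o1 o2 o3 : Option ℕ} {j : ℕ}
    (h1 : o1 ≠ some j) (h2 : o2 ≠ some j) (h3 : o3 ≠ some j) :
    mid3 a1 a2 a3 o1 o2 o3 j = [] := by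
  simp [mid3, h1, h2, h3]

lemma countP_two (j1 : ℕ) :
    ([none, some j1, some j1] : List (Option ℕ)).countP Option.isSome = 2 := by
  simp [List.countP_cons]

lemma countP_two' (j1 : ℕ) :
    ([some j1, some j1, none] : List (Option ℕ)).countP Option.isSome = 2 := by
  simp [List.countP_cons]

lemma countP_three_all (i1 i2 i3 : ℕ) :
    ([some i1, some i2, some i3] : List (Option ℕ)).countP Option.isSome = 3 := by
  simp [List.countP_cons]

/-- Backward transfer along a `k1` move. -/
lemma reach_k1_back {x y : List ℕ} {a b c : ℕ} (hab : a ≤ b) (hbc : b < c) (k s : ℕ) :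
    Reach k s (x ++ [c, a, b] ++ y) → Reach k s (x ++ [a, c, b] ++ y) := by
  intro hr
  obtain ⟨cs, ⟨hlen, hmem, hcls⟩, hcount⟩ := hr
  obtain ⟨cx, o1, o2, o3, cy, rfl, hcx, hcy⟩ := cs_split3 hlen
  by_cases hs12 : ∃ j : ℕ, o1 = some j ∧ o2 = some j
  · obtain ⟨j1, h1, h2⟩ := hs12
    subst h1; subst h2
    have ho3 : o3 ≠ some j1 := by
      intro hgo; subst hgo
      have H := hcls j1
      rw [classOf_three c a b (some j1) (some j1) (some j1) hcx j1] at H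
      have hm : mid3 c a b (some j1) (some j1) (some j1) j1 = [c, a, b] := by simp [mid3]
      rw [hm] at H
      have hM := (pairwise_three.1 H).2.1
      have hab' : a > b := (List.pairwise_cons.1 ((List.pairwise_cons.1 hM).2)).1 b (by simp)
      omega
    have H1 := hcls j1
    rw [classOf_three c a b (some j1) (some j1) o3 hcx j1] at H1
    have hm1 : mid3 c a b (some j1) (some j1) o3 j1 = [c, a] := by simp [mid3, ho3]
    rw [hm1] at H1
    obtain ⟨pX1, pM1, pY1, hXM1, hXY1, hMY1⟩ := pairwise_three.1 H1
    rcases o3 with _ | j2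
    · -- third letter uncolored: local recoloring
      refine ⟨cx ++ [none, some j1, some j1] ++ cy, ⟨by simpa using hlen, ?_, ?_⟩, ?_⟩
      · intro j hj
        rw [mem_three] at hj
        apply hmem j
        rw [mem_three]
        rcases hj with h | h | h | h | h
        · exact Or.inl h
        · exact absurd h (by simp)
        · exact Or.inr (Or.inl h)
        · exact Or.inr (Or.inl h)
        · exact Or.inr (Or.inr (Or.inr (Or.inr h)))
      · intro j
        rw [classOf_three a c b none (some j1) (some j1) hcx j]
        by_cases hj : j = j1
        · rw [hj]
          have hm : mid3 a c b none (some j1) (some j1) j1 = [c, b] := by simp [mid3]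
          rw [hm]
          refine pairwise_three.2 ⟨pX1, ?_, pY1, ?_, hXY1, ?_⟩
          · refine List.pairwise_cons.2 ⟨?_, by simp⟩
            intro t ht; simp at ht; omega
          · intro t ht b' hb'
            simp at hb'
            have h3 := hXM1 t ht c (by simp)
            rcases hb' with rfl | rfl
            · exact h3
            · omega
          · intro t ht y' hy'
            simp at ht
            have h4 := hMY1 a (by simp) y' hy'
            rcases ht with rfl | rfl
            · exact hMY1 _ (by simp) y' hy'
            · omega
        · have hj' : some j1 ≠ some j := by simpa using fun h => hj h.symm
          rw [mid3_nil (by simp) hj' hj']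
          have H := hcls j
          rw [classOf_three c a b (some j1) (some j1) none hcx j,
            mid3_nil hj' hj' (by simp)] at H
          exact H
      · rw [countP_split, countP_two]
        rw [countP_split, countP_two'] at hcount
        omega
    · -- third letter colored j2 : tail swap
      have hne12 : j1 ≠ j2 := by intro h; exact ho3 (by rw [h])
      have hne21 : j2 ≠ j1 := Ne.symm hne12
      have H2 := hcls j2
      rw [classOf_three c a b (some j1) (some j1) (some j2) hcx j2] at H2
      have hm2 : mid3 c a b (some j1) (some j1) (some j2) j2 = [b] := by
        simp [mid3, hne12]
      rw [hm2] at H2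
      obtain ⟨pX2, _, pY2, hXM2, hXY2, hMY2⟩ := pairwise_three.1 H2
      refine ⟨cx ++ [some j2, some j1, some j1] ++ cy.map (swapc j1 j2),
        ⟨by simpa using hlen, ?_, ?_⟩, ?_⟩
      · intro j hj
        rw [mem_three] at hj
        rcases hj with h | h | h | h | h
        · exact hmem j (by rw [mem_three]; exact Or.inl h)
        · exact hmem j (by rw [mem_three]; exact Or.inr (Or.inr (Or.inr (Or.inl h))))
        · exact hmem j (by rw [mem_three]; exact Or.inr (Or.inl h))
        · exact hmem j (by rw [mem_three]; exact Or.inr (Or.inl h))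
        · rcases mem_map_swapc h with h' | h' | h'
          · exact hmem j (by rw [mem_three]; exact Or.inr (Or.inr (Or.inr (Or.inr h'))))
          · exact hmem j (by rw [mem_three]; exact Or.inr (Or.inl (by rw [h'])))
          · exact hmem j
              (by rw [mem_three]; exact Or.inr (Or.inr (Or.inr (Or.inl (by rw [h'])))))
      · intro j
        rw [classOf_three a c b (some j2) (some j1) (some j1) hcx j,
          classOf_map_swapc y cy j1 j2 j]
        by_cases hj1 : j = j1
        · rw [hj1]
          rw [show swapn j1 j2 j1 = j2 from by simp [swapn]]
          have hm : mid3 a c b (some j2) (some j1) (some j1) j1 = [c, b] := by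
            simp [mid3, hne21]
          rw [hm]
          refine pairwise_three.2 ⟨pX1, ?_, pY2, ?_, ?_, ?_⟩
          · refine List.pairwise_cons.2 ⟨?_, by simp⟩
            intro t ht; simp at ht; omega
          · intro t ht b' hb'
            simp at hb'
            have h3 := hXM1 t ht c (by simp)
            rcases hb' with rfl | rfl
            · exact h3
            · omega
          · intro t ht y' hy'
            have h3 := hXM1 t ht c (by simp)
            have h4 := hMY2 b (by simp) y' hy'
            omega
          · intro t ht y' hy'
            simp at ht
            have h4 := hMY2 b (by simp) y' hy'
            rcases ht with rfl | rfl
            · omega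
            · exact h4
        · by_cases hj2 : j = j2
          · rw [hj2]
            rw [show swapn j1 j2 j2 = j1 from by simp [swapn, hne21]]
            have hm : mid3 a c b (some j2) (some j1) (some j1) j2 = [a] := by
              simp [mid3, hne12]
            rw [hm]
            refine pairwise_three.2 ⟨pX2, by simp, pY1, ?_, ?_, ?_⟩
            · intro t ht b' hb'
              simp at hb'
              subst hb'
              have h3 := hXM2 t ht b (by simp)
              omega
            · intro t ht y' hy'
              have h3 := hXM2 t ht b (by simp)
              have h4 := hMY1 a (by simp) y' hy'
              omega
            · intro t ht y' hy'
              simp at ht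
              subst ht
              exact hMY1 _ (by simp) y' hy'
          · have e1 : some j1 ≠ some j := by simpa using fun h => hj1 h.symm
            have e2 : some j2 ≠ some j := by simpa using fun h => hj2 h.symm
            rw [show swapn j1 j2 j = j from by simp [swapn, hj1, hj2]]
            rw [mid3_nil e2 e1 e1]
            have H := hcls j
            rw [classOf_three c a b (some j1) (some j1) (some j2) hcx j,
              mid3_nil e1 e1 e2] at H
            exact H
      · rw [countP_split, countP_three_all, countP_map_swapc]
        rw [countP_split, countP_three_all] at hcount
        exact hcount
  · push_neg at hs12
    refine ⟨cx ++ [o2, o1, o3] ++ cy, valid_swap12 hcx ?_ ⟨hlen, hmem, hcls⟩, ?_⟩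
    · intro j ⟨u1, u2⟩; exact hs12 j u1 u2
    · rw [countP_split, countP_mid_perm12, ← countP_split]
      exact hcount

/-- Backward transfer along a `k2` move. -/
lemma reach_k2_back {x y : List ℕ} {a b c : ℕ} (hab : a < b) (hbc : b ≤ c) (k s : ℕ) :
    Reach k s (x ++ [b, c, a] ++ y) → Reach k s (x ++ [b, a, c] ++ y) := by
  intro hr
  obtain ⟨cs, ⟨hlen, hmem, hcls⟩, hcount⟩ := hr
  obtain ⟨cx, o1, o2, o3, cy, rfl, hcx, hcy⟩ := cs_split3 hlen
  by_cases hs23 : ∃ j : ℕ, o2 = some j ∧ o3 = some j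
  · obtain ⟨j1, h2, h3⟩ := hs23
    subst h2; subst h3
    have ho1 : o1 ≠ some j1 := by
      intro hgo; subst hgo
      have H := hcls j1
      rw [classOf_three b c a (some j1) (some j1) (some j1) hcx j1] at H
      have hm : mid3 b c a (some j1) (some j1) (some j1) j1 = [b, c, a] := by simp [mid3]
      rw [hm] at H
      have hM := (pairwise_three.1 H).2.1
      have hbc' : b > c := (List.pairwise_cons.1 hM).1 c (by simp)
      omega
    have H1 := hcls j1
    rw [classOf_three b c a o1 (some j1) (some j1) hcx j1] at H1
    have hm1 : mid3 b c a o1 (some j1) (some j1) j1 = [c, a] := by simp [mid3, ho1]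
    rw [hm1] at H1
    obtain ⟨pX1, pM1, pY1, hXM1, hXY1, hMY1⟩ := pairwise_three.1 H1
    rcases o1 with _ | j2
    · -- first letter uncolored : local recoloring
      refine ⟨cx ++ [some j1, some j1, none] ++ cy, ⟨by simpa using hlen, ?_, ?_⟩, ?_⟩
      · intro j hj
        rw [mem_three] at hj
        apply hmem j
        rw [mem_three]
        rcases hj with h | h | h | h | h
        · exact Or.inl h
        · exact Or.inr (Or.inr (Or.inl h))
        · exact Or.inr (Or.inr (Or.inl h))
        · exact absurd h (by simp)
        · exact Or.inr (Or.inr (Or.inr (Or.inr h)))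
      · intro j
        rw [classOf_three b a c (some j1) (some j1) none hcx j]
        by_cases hj : j = j1
        · rw [hj]
          have hm : mid3 b a c (some j1) (some j1) none j1 = [b, a] := by simp [mid3]
          rw [hm]
          refine pairwise_three.2 ⟨pX1, ?_, pY1, ?_, hXY1, ?_⟩
          · refine List.pairwise_cons.2 ⟨?_, by simp⟩
            intro t ht; simp at ht; omega
          · intro t ht b' hb'
            simp at hb'
            have h3 := hXM1 t ht c (by simp)
            have h4 := hXM1 t ht a (by simp)
            rcases hb' with rfl | rfl
            · omega
            · exact h4
          · intro t ht y' hy'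
            simp at ht
            have h4 := hMY1 a (by simp) y' hy'
            rcases ht with rfl | rfl
            · omega
            · exact h4
        · have hj' : some j1 ≠ some j := by simpa using fun h => hj h.symm
          rw [mid3_nil hj' hj' (by simp)]
          have H := hcls j
          rw [classOf_three b c a none (some j1) (some j1) hcx j,
            mid3_nil (by simp) hj' hj'] at H
          exact H
      · rw [countP_split, countP_two']
        rw [countP_split, countP_two] at hcount
        omega
    · -- first letter colored j2 : tail swap
      have hne12 : j1 ≠ j2 := by intro h; exact ho1 (by rw [h])
      have hne21 : j2 ≠ j1 := Ne.symm hne12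
      have H2 := hcls j2
      rw [classOf_three b c a (some j2) (some j1) (some j1) hcx j2] at H2
      have hm2 : mid3 b c a (some j2) (some j1) (some j1) j2 = [b] := by
        simp [mid3, hne12]
      rw [hm2] at H2
      obtain ⟨pX2, _, pY2, hXM2, hXY2, hMY2⟩ := pairwise_three.1 H2
      refine ⟨cx ++ [some j2, some j2, some j1] ++ cy.map (swapc j1 j2),
        ⟨by simpa using hlen, ?_, ?_⟩, ?_⟩
      · intro j hj
        rw [mem_three] at hj
        rcases hj with h | h | h | h | h
        · exact hmem j (by rw [mem_three]; exact Or.inl h)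
        · exact hmem j (by rw [mem_three]; exact Or.inr (Or.inl h))
        · exact hmem j (by rw [mem_three]; exact Or.inr (Or.inl h))
        · exact hmem j (by rw [mem_three]; exact Or.inr (Or.inr (Or.inl h)))
        · rcases mem_map_swapc h with h' | h' | h'
          · exact hmem j (by rw [mem_three]; exact Or.inr (Or.inr (Or.inr (Or.inr h'))))
          · exact hmem j (by rw [mem_three]; exact Or.inr (Or.inr (Or.inl (by rw [h']))))
          · exact hmem j (by rw [mem_three]; exact Or.inr (Or.inl (by rw [h'])))
      · intro j
        rw [classOf_three b a c (some j2) (some j2) (some j1) hcx j,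
          classOf_map_swapc y cy j1 j2 j]
        by_cases hj1 : j = j1
        · rw [hj1]
          rw [show swapn j1 j2 j1 = j2 from by simp [swapn]]
          have hm : mid3 b a c (some j2) (some j2) (some j1) j1 = [c] := by
            simp [mid3, hne21]
          rw [hm]
          refine pairwise_three.2 ⟨pX1, by simp, pY2, ?_, ?_, ?_⟩
          · intro t ht b' hb'
            simp at hb'
            subst hb'
            exact hXM1 t ht _ (by simp)
          · intro t ht y' hy'
            have h3 := hXM1 t ht c (by simp)
            have h4 := hMY2 b (by simp) y' hy'
            omega
          · intro t ht y' hy'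
            simp at ht
            subst ht
            have h4 := hMY2 b (by simp) y' hy'
            omega
        · by_cases hj2 : j = j2
          · rw [hj2]
            rw [show swapn j1 j2 j2 = j1 from by simp [swapn, hne21]]
            have hm : mid3 b a c (some j2) (some j2) (some j1) j2 = [b, a] := by
              simp [mid3, hne12]
            rw [hm]
            refine pairwise_three.2 ⟨pX2, ?_, pY1, ?_, ?_, ?_⟩
            · refine List.pairwise_cons.2 ⟨?_, by simp⟩
              intro t ht; simp at ht; omega
            · intro t ht b' hb'
              simp at hb'
              have h3 := hXM2 t ht b (by simp)
              rcases hb' with rfl | rfl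
              · exact h3
              · omega
            · intro t ht y' hy'
              have h3 := hXM2 t ht b (by simp)
              have h4 := hMY1 a (by simp) y' hy'
              omega
            · intro t ht y' hy'
              simp at ht
              have h4 := hMY1 a (by simp) y' hy'
              rcases ht with rfl | rfl
              · omega
              · exact h4
          · have e1 : some j1 ≠ some j := by simpa using fun h => hj1 h.symm
            have e2 : some j2 ≠ some j := by simpa using fun h => hj2 h.symm
            rw [show swapn j1 j2 j = j from by simp [swapn, hj1, hj2]]
            rw [mid3_nil e2 e2 e1]
            have H := hcls j
            rw [classOf_three b c a (some j2) (some j1) (some j1) hcx j,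
              mid3_nil e2 e1 e1] at H
            exact H
      · rw [countP_split, countP_three_all, countP_map_swapc]
        rw [countP_split, countP_three_all] at hcount
        exact hcount
  · push_neg at hs23
    refine ⟨cx ++ [o1, o3, o2] ++ cy, valid_swap23 hcx ?_ ⟨hlen, hmem, hcls⟩, ?_⟩
    · intro j ⟨u1, u2⟩; exact hs23 j u1 u2
    · rw [countP_split, countP_mid_perm23, ← countP_split]
      exact hcount

/-- Forward transfer along a Knuth move. -/
lemma reach_kstep {w w' : List ℕ} (h : KStep w w') (k s : ℕ) :
    Reach k s w → Reach k s w' := by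
  cases h with
  | k1 x y a b c hab hbc =>
    intro hr
    obtain ⟨cs, ⟨hlen, hmem, hcls⟩, hcount⟩ := hr
    obtain ⟨cx, o1, o2, o3, cy, rfl, hcx, hcy⟩ := cs_split3 hlen
    have hne : ∀ j : ℕ, ¬(o1 = some j ∧ o2 = some j) := by
      rintro j ⟨h1, h2⟩
      subst h1; subst h2
      have H := hcls j
      rw [classOf_three a c b (some j) (some j) o3 hcx j] at H
      have hM := (pairwise_three.1 H).2.1
      have hme : mid3 a c b (some j) (some j) o3 j
          = a :: c :: (if o3 = some j then [b] else []) := by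
        simp [mid3]
      rw [hme] at hM
      have : a > c := (List.pairwise_cons.1 hM).1 c (List.mem_cons_self)
      omega
    refine ⟨cx ++ [o2, o1, o3] ++ cy, valid_swap12 hcx hne ⟨hlen, hmem, hcls⟩, ?_⟩
    rw [countP_split, countP_mid_perm12, ← countP_split]
    exact hcount
  | k2 x y a b c hab hbc =>
    intro hr
    obtain ⟨cs, ⟨hlen, hmem, hcls⟩, hcount⟩ := hr
    obtain ⟨cx, o1, o2, o3, cy, rfl, hcx, hcy⟩ := cs_split3 hlen
    have hne : ∀ j : ℕ, ¬(o2 = some j ∧ o3 = some j) := by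
      rintro j ⟨h2, h3⟩
      subst h2; subst h3
      have H := hcls j
      rw [classOf_three b a c o1 (some j) (some j) hcx j] at H
      have hM := (pairwise_three.1 H).2.1
      have hac : a > c := by
        by_cases h1 : o1 = some j
        · have hme : mid3 b a c o1 (some j) (some j) j = [b, a, c] := by simp [mid3, h1]
          rw [hme] at hM
          exact (List.pairwise_cons.1 ((List.pairwise_cons.1 hM).2)).1 c (by simp)
        · have hme : mid3 b a c o1 (some j) (some j) j = [a, c] := by simp [mid3, h1]
          rw [hme] at hM
          exact (List.pairwise_cons.1 hM).1 c (by simp)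
      omega
    refine ⟨cx ++ [o1, o3, o2] ++ cy, valid_swap23 hcx hne ⟨hlen, hmem, hcls⟩, ?_⟩
    rw [countP_split, countP_mid_perm23, ← countP_split]
    exact hcount

/-- Backward transfer along a Knuth move. -/
lemma reach_kstep' {w w' : List ℕ} (h : KStep w w') (k s : ℕ) :
    Reach k s w' → Reach k s w := by
  cases h with
  | k1 x y a b c hab hbc => exact reach_k1_back hab hbc k s
  | k2 x y a b c hab hbc => exact reach_k2_back hab hbc k s

lemma reach_kequiv {w w' : List ℕ} (h : KEquiv w w') (k s : ℕ) :
    Reach k s w ↔ Reach k s w' := by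
  induction h with
  | rel a b hab => exact ⟨reach_kstep hab k s, reach_kstep' hab k s⟩
  | refl a => exact Iff.rfl
  | symm a b _ ih => exact ih.symm
  | trans a b c _ _ ih1 ih2 => exact ih1.trans ih2

end Plactic

namespace Plactic

/-! ### Transfer along reverse-complement -/

lemma zip_reverse' : ∀ (l : List ℕ) (l' : List (Option ℕ)), l.length = l'.length →
    l.reverse.zip l'.reverse = (l.zip l').reverse := by
  intro l
  induction l with
  | nil =>
    intro l' h
    have : l' = [] := List.eq_nil_of_length_eq_zero (by simpa using h.symm)
    subst this; simp
  | cons a t ih =>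
    intro l' h
    cases l' with
    | nil => simp at h
    | cons o cs =>
      simp only [List.reverse_cons]
      rw [List.zip_append (by simp only [List.length_reverse]; simpa using h),
        ih cs (by simpa using h)]
      simp

lemma zip_map_left' (f : ℕ → ℕ) : ∀ (w : List ℕ) (cs : List (Option ℕ)),
    (w.map f).zip cs = (w.zip cs).map (fun p => (f p.1, p.2)) := by
  intro w
  induction w with
  | nil => intro cs; simp
  | cons a t ih =>
    intro cs
    cases cs with
    | nil => simp
    | cons o cs => simp [ih cs]

lemma RC_entries {m : ℕ} {w : List ℕ} (hw : ∀ t ∈ w, 1 ≤ t ∧ t ≤ m) :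
    ∀ t ∈ RC m w, 1 ≤ t ∧ t ≤ m := by
  intro t ht
  rw [RC, List.mem_reverse] at ht
  rcases List.mem_map.1 ht with ⟨u, hu, rfl⟩
  have := hw u hu
  omega

lemma RC_RC {m : ℕ} {w : List ℕ} (hw : ∀ t ∈ w, 1 ≤ t ∧ t ≤ m) : RC m (RC m w) = w := by
  unfold RC
  rw [List.map_reverse, List.reverse_reverse, List.map_map]
  calc w.map ((fun x => m - x + 1) ∘ (fun x => m - x + 1)) = w.map id := by
        apply List.map_congr_left
        intro t ht
        have := hw t ht
        simp only [Function.comp, id]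
        omega
    _ = w := List.map_id w

lemma classOf_RC {m : ℕ} (w : List ℕ) (cs : List (Option ℕ)) (j : ℕ)
    (hlen : cs.length = w.length) :
    classOf (RC m w) cs.reverse j
      = ((classOf w cs j).map (fun t => m - t + 1)).reverse := by
  unfold classOf RC
  rw [zip_reverse' _ _ (by simpa using hlen.symm), List.filter_reverse, List.map_reverse]
  congr 1
  rw [zip_map_left', List.filter_map, List.map_map]
  have hpred : ((fun p : ℕ × Option ℕ => decide (p.2 = some j)) ∘
      (fun p : ℕ × Option ℕ => (m - p.1 + 1, p.2))) =
      fun p : ℕ × Option ℕ => decide (p.2 = some j) := rfl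
  rw [hpred, List.map_map]
  exact List.map_congr_left (fun p _ => rfl)

lemma reach_RC {m k s : ℕ} {w : List ℕ} (hw : ∀ t ∈ w, 1 ≤ t ∧ t ≤ m) :
    Reach k s w → Reach k s (RC m w) := by
  rintro ⟨cs, ⟨hlen, hmem, hcls⟩, hcount⟩
  refine ⟨cs.reverse, ⟨by simp [RC]; omega, ?_, ?_⟩, ?_⟩
  · intro j hj
    exact hmem j (by simpa using hj)
  · intro j
    rw [classOf_RC w cs j hlen, List.pairwise_reverse, List.pairwise_map]
    have hsub := classOf_sublist w cs j hlen
    refine (hcls j).imp_of_mem ?_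
    intro a b ha hb hab
    have h1 := hw a (hsub.subset ha)
    have h2 := hw b (hsub.subset hb)
    show m - b + 1 > m - a + 1
    omega
  · rw [← hcount]
    exact List.countP_reverse

/-- Transfer of reach along reverse complement, both ways. -/
lemma reach_RC_iff {m k s : ℕ} {w : List ℕ} (hw : ∀ t ∈ w, 1 ≤ t ∧ t ≤ m) :
    Reach k s w ↔ Reach k s (RC m w) := by
  constructor
  · exact reach_RC hw
  · intro h
    have h2 := reach_RC (RC_entries hw) h
    rwa [RC_RC hw] at h2

/-! ### Reconstruction of the shape from the Greene invariants -/

lemma sum_min_succ (l : List ℕ) (K : ℕ) :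
    (l.map (fun r => min (K + 1) r)).sum
      = (l.map (fun r => min K r)).sum + l.countP (fun r => decide (K < r)) := by
  induction l with
  | nil => simp
  | cons a t ih =>
    simp only [List.map_cons, List.sum_cons, List.countP_cons, ih]
    by_cases h : K < a <;> simp [h] <;> omega

lemma eq_of_counts : ∀ (l1 l2 : List ℕ), l1.Pairwise (· ≥ ·) → l2.Pairwise (· ≥ ·) →
    (∀ t ∈ l1, 0 < t) → (∀ t ∈ l2, 0 < t) →
    (∀ K, l1.countP (fun r => decide (K < r)) = l2.countP (fun r => decide (K < r))) →
    l1 = l2 := by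
  intro l1
  induction l1 with
  | nil =>
    intro l2 _ _ _ hpos2 hcnt
    cases l2 with
    | nil => rfl
    | cons b t2 =>
      exfalso
      have h0 := hcnt 0
      have hb := hpos2 b (by simp)
      simp [List.countP_cons, hb] at h0
  | cons a t1 ih =>
    intro l2 hp1 hp2 hpos1 hpos2 hcnt
    cases l2 with
    | nil =>
      exfalso
      have h0 := hcnt 0
      have ha := hpos1 a (by simp)
      simp [List.countP_cons, ha] at h0
    | cons b t2 =>
      have hab : a = b := by
        by_contra hne
        rcases Nat.lt_or_ge a b with h | h
        · have h0 := hcnt a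
          have h1 : (a :: t1).countP (fun r => decide (a < r)) = 0 := by
            apply List.countP_eq_zero.2
            intro t ht
            rcases List.mem_cons.1 ht with rfl | ht
            · simp
            · have := (List.pairwise_cons.1 hp1).1 t ht
              simp; omega
          have h2 : 0 < (b :: t2).countP (fun r => decide (a < r)) := by
            apply List.countP_pos_iff.2
            exact ⟨b, by simp, by simpa using h⟩
          omega
        · have hba : b < a := lt_of_le_of_ne h (fun hh => hne hh.symm)
          have h0 := hcnt b
          have h1 : (b :: t2).countP (fun r => decide (b < r)) = 0 := by
            apply List.countP_eq_zero.2
            intro t ht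
            rcases List.mem_cons.1 ht with rfl | ht
            · simp
            · have := (List.pairwise_cons.1 hp2).1 t ht
              simp; omega
          have h2 : 0 < (a :: t1).countP (fun r => decide (b < r)) := by
            apply List.countP_pos_iff.2
            exact ⟨a, by simp, by simpa using hba⟩
          omega
      subst hab
      have htail : t1 = t2 := by
        refine ih t2 hp1.of_cons hp2.of_cons
          (fun t ht => hpos1 t (List.mem_cons_of_mem _ ht))
          (fun t ht => hpos2 t (List.mem_cons_of_mem _ ht)) ?_
        intro K
        have h0 := hcnt K
        simp only [List.countP_cons] at h0
        omega
      rw [htail]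

lemma shape_pairwise : ∀ (T : List (List ℕ)), IsSSYT T →
    (T.map List.length).Pairwise (· ≥ ·) := by
  intro T
  induction T with
  | nil => intro _; simp
  | cons r rs ih =>
    intro hT
    rw [isSSYT_cons_iff] at hT
    obtain ⟨_, _, hrs, hlen, _⟩ := hT
    rw [List.map_cons]
    refine List.pairwise_cons.2 ⟨?_, ih hrs⟩
    intro L hL
    rcases List.mem_map.1 hL with ⟨r', hr', rfl⟩
    cases rs with
    | nil => simp at hr'
    | cons r2 rs2 =>
      have hh : r2.length ≤ r.length := by simpa using hlen
      rcases List.mem_cons.1 hr' with rfl | hr'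
      · exact hh
      · have h2 := (List.pairwise_cons.1 (ih hrs)).1 r'.length
          (List.mem_map.2 ⟨r', hr', rfl⟩)
        omega

lemma shape_pos {T : List (List ℕ)} (hT : IsSSYT T) : ∀ t ∈ T.map List.length, 0 < t := by
  intro t ht
  rcases List.mem_map.1 ht with ⟨r, hr, rfl⟩
  exact List.length_pos_iff.2 (hT.2.2.2 r hr)

end Plactic

open Plactic in
theorem stmt_19 (m : ℕ) (T : List (List ℕ)) (hT : IsSSYT T)
    (hentries : ∀ r ∈ T, ∀ x ∈ r, 1 ≤ x ∧ x ≤ m) :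
    (evac m T).map List.length = T.map List.length := by
  have hw : ∀ t ∈ rowWord T, 1 ≤ t ∧ t ≤ m := by
    intro t ht
    rw [rowWord] at ht
    rcases List.mem_flatten.1 ht with ⟨r, hr, htr⟩
    exact hentries r (List.mem_reverse.1 hr) t htr
  have hE : IsSSYT (evac m T) := P_isSSYT _
  have key : ∀ K : ℕ, ((evac m T).map (fun r => min K r.length)).sum
      = (T.map (fun r => min K r.length)).sum := by
    intro K
    have hiff : ∀ s, Reach K s (rowWord T) ↔ Reach K s (rowWord (evac m T)) := by
      intro s
      exact (reach_RC_iff hw).trans (reach_kequiv (P_rw (RC m (rowWord T))) K s)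
    refine le_antisymm ?_ ?_
    · exact tableau_upper hT ((hiff _).2 (tableau_reach hE K))
    · exact tableau_upper hE ((hiff _).1 (tableau_reach hT K))
  have conv1 : ∀ (L : List (List ℕ)) (K : ℕ),
      ((L.map List.length).map (fun n => min K n)).sum
        = (L.map (fun r => min K r.length)).sum := by
    intro L K
    rw [List.map_map]
    rfl
  have hcnt : ∀ K : ℕ, ((evac m T).map List.length).countP (fun r => decide (K < r))
      = (T.map List.length).countP (fun r => decide (K < r)) := by
    intro K
    have e1 := sum_min_succ ((evac m T).map List.length) K
    have e2 := sum_min_succ (T.map List.length) K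
    have k1 := key K
    have k2 := key (K + 1)
    have c1 := conv1 (evac m T) K
    have c2 := conv1 T K
    have c3 := conv1 (evac m T) (K + 1)
    have c4 := conv1 T (K + 1)
    omega
  exact eq_of_counts _ _ (shape_pairwise _ hE) (shape_pairwise _ hT)
    (shape_pos hE) (shape_pos hT) hcnt
end
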